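/- arXiv:2204.05175 — 4 statements merged into one kernel-verified Lean document; each statement's English description precedes it below -/
import Mathlib

section
/- Suppose Assumption 1 holds with β₀ = 0_p (so that U := Y₀ − X₀'β₀ = Y₀), and assume liminf_{x→∞} inf_{q ∈ S_p} x^c P(X₀'q > x) > 0 and limsup_{x→∞} x^d P(|U| > x) < ∞ for some d > c > 0. Then there exist K₂ > 0 and ε̄ ∈ (0, 1/2) such that for all ε ∈ (0, ε̄], d_H(B, B_ε) ≤ K₂ ε^{1/c − 1/d}, where d_H is the Hausdorff distance, B = {β ∈ ℝ^p : Y₀ ⪰cx X₀'β}, and B_ε = {λ q : q ∈ S_p, 0 ≤ λ ≤ S_ε(F_{Y₀}, F_{X₀'q})}. -/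
open MeasureTheory ProbabilityTheory Filter Set

noncomputable section

variable {Ω : Type*} [MeasurableSpace Ω]

/-- The centered version `A₀ = A - E[A]` of a real random variable. -/
def cent (μ : Measure Ω) (f : Ω → ℝ) : Ω → ℝ := fun ω => f ω - ∫ ω', f ω' ∂μ

/-- The centered version `X₀ = X - E[X]` of an `ℝ^p`-valued random vector. -/
def centV {p : ℕ} (μ : Measure Ω) (X : Ω → EuclideanSpace ℝ (Fin p)) :
    Ω → EuclideanSpace ℝ (Fin p) := fun ω => X ω - ∫ ω', X ω' ∂μ

/-- Euclidean inner product `x'y`. -/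
def dotp {p : ℕ} (x y : EuclideanSpace ℝ (Fin p)) : ℝ := ∑ i, x i * y i

/-- `A` dominates `B` in the convex order: for every convex `φ : ℝ → ℝ`,
`E[φ(B)] ≤ E[φ(A)]`, where both expectations are well defined in `(-∞, +∞]`
(any convex `φ` is bounded below by an affine function, so for a random variable
with finite mean the expectation is `+∞` exactly when `φ ∘ ·` is not integrable). -/
def ConvexOrdGE (μ : Measure Ω) (A B : Ω → ℝ) : Prop :=
  ∀ φ : ℝ → ℝ, ConvexOn ℝ Set.univ φ →
    Integrable (fun ω => φ (A ω)) μ →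
      Integrable (fun ω => φ (B ω)) μ ∧ ∫ ω, φ (B ω) ∂μ ≤ ∫ ω, φ (A ω) ∂μ

/-- The cumulative distribution function of a real random variable. -/
def cdfRV (μ : Measure Ω) (A : Ω → ℝ) : ℝ → ℝ := fun t => (μ {ω | A ω ≤ t}).toReal

/-- Generalized inverse (quantile function) `F⁻¹(t) = inf {x : t ≤ F x}` of a cdf. -/
def qf (F : ℝ → ℝ) : ℝ → ℝ := fun t => sInf {x | t ≤ F x}

/-- The ratio of integrated quantiles `R(α, F, G)`. -/
def Rratio (α : ℝ) (F G : ℝ → ℝ) : ℝ := (∫ t in α..1, qf F t) / (∫ t in α..1, qf G t)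

/-- `S(F, G) = inf_{α ∈ (0,1)} R(α, F, G)`. -/
def Sinf (F G : ℝ → ℝ) : ℝ := sInf {r | ∃ α ∈ Set.Ioo (0:ℝ) 1, r = Rratio α F G}

/-- `S_ε(F, G) = min_{α ∈ [ε, 1-ε]} R(α, F, G)`. -/
def Seps (ε : ℝ) (F G : ℝ → ℝ) : ℝ := sInf {r | ∃ α ∈ Set.Icc ε (1 - ε), r = Rratio α F G}

/-- The covariance matrix `Var(X)` of an `ℝ^p`-valued random vector. -/
def covMatrix {p : ℕ} (μ : Measure Ω) (X : Ω → EuclideanSpace ℝ (Fin p)) :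
    Matrix (Fin p) (Fin p) ℝ :=
  Matrix.of fun i j =>
    ∫ ω, (X ω i - ∫ ω', X ω' i ∂μ) * (X ω j - ∫ ω', X ω' j ∂μ) ∂μ

/-- The identified set `B = {β ∈ ℝ^p : Y₀ ⪰cx X₀'β}`. -/
def Bset {p : ℕ} (μ : Measure Ω) (Y : Ω → ℝ) (X : Ω → EuclideanSpace ℝ (Fin p)) :
    Set (EuclideanSpace ℝ (Fin p)) :=
  {β | ConvexOrdGE μ (cent μ Y) (fun ω => dotp (centV μ X ω) β)}

/-- The regularized outer set `B_ε = {λ q : q ∈ S_p, 0 ≤ λ ≤ S_ε(F_{Y₀}, F_{X₀'q})}`. -/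
def BepsSet {p : ℕ} (μ : Measure Ω) (Y : Ω → ℝ) (X : Ω → EuclideanSpace ℝ (Fin p)) (ε : ℝ) :
    Set (EuclideanSpace ℝ (Fin p)) :=
  {x | ∃ (q : EuclideanSpace ℝ (Fin p)) (l : ℝ), ‖q‖ = 1 ∧ 0 ≤ l ∧
    l ≤ Seps ε (cdfRV μ (cent μ Y)) (cdfRV μ (fun ω => dotp (centV μ X ω) q)) ∧ x = l • q}

section AuxLemmas

open Topology Real intervalIntegral

lemma convexOn_hinge (a : ℝ) : ConvexOn ℝ Set.univ (fun x : ℝ => max (x - a) 0) := by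
  have h1 : ConvexOn ℝ Set.univ (fun x : ℝ => x - a) := by
    refine ⟨convex_univ, ?_⟩
    intro x _ y _ s t hs ht hst
    simp only [smul_eq_mul]
    have he : s * (x - a) + t * (y - a) = s * x + t * y - (s + t) * a := by ring
    rw [hst] at he
    linarith
  simpa [Pi.sup_def] using h1.sup (convexOn_const 0 convex_univ)

lemma qf_le_of_le_cdf {F : ℝ → ℝ} {t x : ℝ} (hx : 0 ≤ x) (h : t ≤ F x) : qf F t ≤ x := by
  by_cases hb : BddBelow {y | t ≤ F y}
  · exact csInf_le hb h
  · rw [qf, Real.sInf_of_not_bddBelow hb]; exact hx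

lemma le_qf {F : ℝ → ℝ} {t x : ℝ} (hne : {y | t ≤ F y}.Nonempty)
    (h : ∀ y, t ≤ F y → x ≤ y) : x ≤ qf F t := le_csInf hne h

lemma cdfRV_mono (μ : Measure Ω) [IsProbabilityMeasure μ] (Z : Ω → ℝ) :
    Monotone (cdfRV μ Z) := fun _ _ hxy =>
  ENNReal.toReal_mono (measure_ne_top μ _) (measure_mono (fun _ h => le_trans h hxy))

lemma tail_toReal_eq (μ : Measure Ω) [IsProbabilityMeasure μ] {Z : Ω → ℝ}
    (hZ : Measurable Z) (x : ℝ) :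
    (μ {ω | x < Z ω}).toReal = 1 - cdfRV μ Z x := by
  have hs : MeasurableSet {ω | Z ω ≤ x} := hZ measurableSet_Iic
  have hc : {ω | x < Z ω} = {ω | Z ω ≤ x}ᶜ := by ext ω; simp [not_le]
  rw [hc, prob_compl_eq_one_sub hs, ENNReal.toReal_sub_of_le prob_le_one ENNReal.one_ne_top,
    ENNReal.toReal_one, cdfRV]

lemma exists_cdf_ge (μ : Measure Ω) [IsProbabilityMeasure μ] {Z : Ω → ℝ}
    (hZ : Measurable Z) {t : ℝ} (ht : t < 1) : ∃ x, t ≤ cdfRV μ Z x := by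
  have hmap : ∀ x : ℝ, μ.map Z (Iic x) = μ {ω | Z ω ≤ x} := fun x => by
    rw [Measure.map_apply hZ measurableSet_Iic]; rfl
  have h1 : Tendsto (fun x : ℝ => μ.map Z (Iic x)) atTop (𝓝 (μ.map Z univ)) :=
    tendsto_measure_Iic_atTop (μ.map Z)
  have h2 : μ.map Z univ = 1 := by
    rw [Measure.map_apply hZ MeasurableSet.univ]; simp
  have h3 : Tendsto (fun x : ℝ => cdfRV μ Z x) atTop (𝓝 1) := by
    have := (ENNReal.tendsto_toReal (by simp [h2])).comp h1
    simpa [h2, cdfRV, Function.comp_def, hmap] using this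
  obtain ⟨x, hx⟩ := (h3.eventually (eventually_ge_nhds ht)).exists
  exact ⟨x, hx⟩

lemma tail_lb {x m c₀ cc : ℝ} (hx : 0 < x) (h : c₀ ≤ x ^ cc * m) : c₀ * x ^ (-cc) ≤ m := by
  have hp : 0 < x ^ cc := Real.rpow_pos_of_pos hx _
  rw [Real.rpow_neg hx.le, ← div_eq_mul_inv, div_le_iff₀ hp]
  calc c₀ ≤ x ^ cc * m := h
    _ = m * x ^ cc := by ring

lemma tail_ub {x m C dd : ℝ} (hx : 0 < x) (h : x ^ dd * m ≤ C) : m ≤ C * x ^ (-dd) := by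
  have hp : 0 < x ^ dd := Real.rpow_pos_of_pos hx _
  rw [Real.rpow_neg hx.le, mul_comm, ← div_eq_inv_mul, le_div_iff₀ hp]
  calc m * x ^ dd = x ^ dd * m := by ring
    _ ≤ C := h

lemma abs_coord_le_norm {p : ℕ} (x : EuclideanSpace ℝ (Fin p)) (i : Fin p) : |x i| ≤ ‖x‖ := by
  rw [EuclideanSpace.norm_eq, show |x i| = Real.sqrt (|x i| ^ 2) from (Real.sqrt_sq (abs_nonneg _)).symm]
  apply Real.sqrt_le_sqrt
  exact Finset.single_le_sum (f := fun j => ‖x j‖ ^ 2) (fun j _ => sq_nonneg _) (Finset.mem_univ i)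

lemma expectation_hinge_le (μ : Measure Ω) [IsProbabilityMeasure μ] {W : Ω → ℝ}
    {C d a : ℝ} (hC : 0 < C) (hd : 1 < d) (ha : 1 ≤ a)
    (hint : Integrable (fun ω => max (W ω - a) 0) μ)
    (htail : ∀ x : ℝ, a ≤ x → (μ {ω | x < W ω}).toReal ≤ C * x ^ (-d)) :
    ∫ ω, max (W ω - a) 0 ∂μ ≤ C * (d / (d - 1)) * a ^ (1 - d) := by
  have ha0 : (0:ℝ) < a := lt_of_lt_of_le one_pos ha
  have hnn : 0 ≤ᵐ[μ] fun ω => max (W ω - a) 0 := ae_of_all _ fun ω => le_max_right _ _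
  rw [hint.integral_eq_integral_meas_lt hnn]
  set g : ℝ → ℝ := fun t => C * max a t ^ (-d) with hg
  have hsetEq : ∀ t : ℝ, 0 < t → {ω | t < max (W ω - a) 0} = {ω | a + t < W ω} := by
    intro t ht; ext ω
    simp only [mem_setOf_eq, lt_max_iff]
    constructor
    · rintro (h | h)
      · linarith
      · linarith
    · intro h; left; linarith
  have hptwise : ∀ t ∈ Ioi (0:ℝ),
      (μ {ω | t < max (W ω - a) 0}).toReal ≤ g t := by
    intro t ht
    rw [hsetEq t ht]
    have h1 : (μ {ω | a + t < W ω}).toReal ≤ C * (a + t) ^ (-d) :=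
      htail _ (by linarith [le_of_lt (mem_Ioi.mp ht)])
    refine h1.trans ?_
    have hmax : max a t ≤ a + t := max_le (by linarith [mem_Ioi.mp ht]) (by linarith)
    have hmaxpos : 0 < max a t := lt_of_lt_of_le ha0 (le_max_left _ _)
    exact mul_le_mul_of_nonneg_left
      (Real.rpow_le_rpow_of_nonpos hmaxpos hmax (by linarith)) hC.le
  have hIoc : IntegrableOn g (Ioc 0 a) volume := by
    have h0 : IntegrableOn (fun _ : ℝ => C * a ^ (-d)) (Ioc 0 a) volume :=
      integrableOn_const measure_Ioc_lt_top.ne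
    refine h0.congr_fun (fun t ht => ?_) measurableSet_Ioc
    simp [hg, max_eq_left ht.2]
  have hIoi : IntegrableOn g (Ioi a) volume := by
    have h0 : IntegrableOn (fun t : ℝ => t ^ (-d)) (Ioi a) volume :=
      integrableOn_Ioi_rpow_of_lt (by linarith) ha0
    have h1 : IntegrableOn (fun t : ℝ => C * t ^ (-d)) (Ioi a) volume := h0.const_mul C
    refine h1.congr_fun (fun t ht => ?_) measurableSet_Ioi
    simp [hg, max_eq_right (le_of_lt (mem_Ioi.mp ht))]
  have hunion : Ioc (0:ℝ) a ∪ Ioi a = Ioi 0 := Ioc_union_Ioi_eq_Ioi ha0.le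
  have hgint : IntegrableOn g (Ioi 0) volume := by
    rw [← hunion]; exact hIoc.union hIoi
  have hcomp : ∫ t in Ioi (0:ℝ), (μ {ω | t < max (W ω - a) 0}).toReal
      ≤ ∫ t in Ioi (0:ℝ), g t := by
    refine integral_mono_of_nonneg (ae_of_all _ fun t => ENNReal.toReal_nonneg) hgint ?_
    rw [EventuallyLE, ae_restrict_iff' measurableSet_Ioi]
    exact ae_of_all _ hptwise
  refine hcomp.trans ?_
  have hsplit : ∫ t in Ioi (0:ℝ), g t
      = (∫ t in Ioc (0:ℝ) a, g t) + ∫ t in Ioi a, g t := by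
    rw [← hunion, setIntegral_union (Ioc_disjoint_Ioi le_rfl) measurableSet_Ioi hIoc hIoi]
  have hval1 : ∫ t in Ioc (0:ℝ) a, g t = C * a ^ (-d) * a := by
    rw [setIntegral_congr_fun measurableSet_Ioc
      (g := fun _ : ℝ => C * a ^ (-d)) (fun t ht => by simp [hg, max_eq_left ht.2])]
    simp [Real.volume_Ioc, ENNReal.toReal_ofReal ha0.le]
    rw [max_eq_left ha0.le]; ring
  have hval2 : ∫ t in Ioi a, g t = C * (a ^ (1 - d) / (d - 1)) := by
    rw [setIntegral_congr_fun measurableSet_Ioi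
      (g := fun t : ℝ => C * t ^ (-d)) (fun t ht => by simp [hg, max_eq_right (le_of_lt (mem_Ioi.mp ht))]),
      MeasureTheory.integral_const_mul, integral_Ioi_rpow_of_lt (by linarith) ha0]
    rw [show -d + 1 = 1 - d by ring]
    rw [show -(a ^ (1 - d)) / (1 - d) = a ^ (1 - d) / (d - 1) by
      rw [show (1:ℝ) - d = -(d - 1) by ring, div_neg, neg_div, neg_neg]]
  rw [hsplit, hval1, hval2]
  have haexp : a ^ (-d) * a = a ^ (1 - d) := by
    rw [show (1 : ℝ) - d = -d + 1 by ring, Real.rpow_add ha0, Real.rpow_one]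
  rw [mul_assoc, haexp]
  have hne : d - 1 ≠ 0 := by linarith
  have h1 : d / (d - 1) = 1 + 1 / (d - 1) := by field_simp; ring
  rw [show C * (d / (d - 1)) * a ^ (1 - d)
      = C * a ^ (1 - d) + C * (a ^ (1 - d) / (d - 1)) by rw [h1]; ring]

end AuxLemmas

section MainAux

open Topology Real intervalIntegral

variable {Ω : Type*} [MeasurableSpace Ω]

lemma measurable_dotp_centV {p : ℕ} (μ : Measure Ω) {X : Ω → EuclideanSpace ℝ (Fin p)}
    (hXm : Measurable X) (q : EuclideanSpace ℝ (Fin p)) :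
    Measurable (fun ω => dotp (centV μ X ω) q) := by
  have h : (fun ω => dotp (centV μ X ω) q)
      = fun ω => ∑ i, (X ω i - (∫ ω', X ω' ∂μ) i) * q i := by
    funext ω; simp [dotp, centV]
  rw [h]
  exact Finset.measurable_sum _ fun i _ =>
    (((measurable_pi_apply i).comp ((WithLp.measurable_ofLp 2 _).comp hXm)).sub_const _).mul_const _

lemma memℒp_dotp_centV {p : ℕ} (μ : Measure Ω) [IsProbabilityMeasure μ]
    {X : Ω → EuclideanSpace ℝ (Fin p)} (hXm : Measurable X) (hX2 : MemLp X 2 μ)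
    (q : EuclideanSpace ℝ (Fin p)) :
    MemLp (fun ω => dotp (centV μ X ω) q) 2 μ := by
  have hXc : ∀ i : Fin p, MemLp (fun ω => X ω i) 2 μ := fun i =>
    MemLp.of_le hX2.norm ((measurable_pi_apply i).comp ((WithLp.measurable_ofLp 2 _).comp hXm)).aestronglyMeasurable
      (ae_of_all _ fun ω => by
        simpa [Real.norm_eq_abs, abs_norm] using abs_coord_le_norm (X ω) i)
  have h : (fun ω => dotp (centV μ X ω) q)
      = fun ω => ∑ i, q i * ((X ω i) - (∫ ω', X ω' ∂μ) i) := by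
    funext ω
    simp only [dotp, centV]
    exact Finset.sum_congr rfl fun i _ => by simp; ring
  rw [h]
  exact memLp_finset_sum _ fun i _ => (((hXc i).sub (memLp_const _)).const_mul _)

lemma dotp_smul_right {p : ℕ} (x y : EuclideanSpace ℝ (Fin p)) (r : ℝ) :
    dotp x (r • y) = r * dotp x y := by
  simp only [dotp, Finset.mul_sum]
  exact Finset.sum_congr rfl fun i _ => by simp; ring

end MainAux


set_option maxHeartbeats 2000000 in
open Topology Real intervalIntegral in
/-- Under Assumption 1 with `β₀ = 0` (so `U = Y₀`), if the tails of
`X₀'q` are uniformly fat over unit directions `q` and the tails of `U` are thinner,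
then `d_H(B, B_ε) ≤ K₂ ε^{1/c - 1/d}` for all `ε` small enough. -/
theorem stmt13 (μ : Measure Ω) [IsProbabilityMeasure μ] {p : ℕ}
    (Y : Ω → ℝ) (X : Ω → EuclideanSpace ℝ (Fin p))
    (hYm : Measurable Y) (hXm : Measurable X)
    (hY2 : MemLp Y 2 μ) (hX2 : MemLp X 2 μ)
    (hVarY : 0 < variance Y μ) (hVarX : (covMatrix μ X).det ≠ 0)
    (α₀ : ℝ) (β₀ : EuclideanSpace ℝ (Fin p))
    (hmod : μ[Y | MeasurableSpace.comap X inferInstance]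
      =ᵐ[μ] fun ω => α₀ + dotp (X ω) β₀)
    (hβ₀ : β₀ = 0)
    (c d : ℝ) (hc : 0 < c) (hcd : c < d)
    (hXtail : ∃ c₀ > (0:ℝ), ∀ᶠ x : ℝ in atTop,
      ∀ q : EuclideanSpace ℝ (Fin p), ‖q‖ = 1 →
        c₀ ≤ x ^ c * (μ {ω | x < dotp (centV μ X ω) q}).toReal)
    (hUtail : ∃ C : ℝ, ∀ᶠ x : ℝ in atTop,
      x ^ d * (μ {ω | x < |cent μ Y ω - dotp (centV μ X ω) β₀|}).toReal ≤ C) :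
    ∃ K₂ > (0:ℝ), ∃ εb ∈ Set.Ioo (0:ℝ) (1/2), ∀ ε : ℝ, 0 < ε → ε ≤ εb →
      Metric.hausdorffDist (Bset μ Y X) (BepsSet μ Y X ε) ≤ K₂ * ε ^ (1/c - 1/d) := by
  classical
  subst hβ₀
  obtain ⟨c₀, hc₀, hXt⟩ := hXtail
  obtain ⟨C0, hUt⟩ := hUtail
  simp only [show ∀ ω : Ω, dotp (centV μ X ω) (0 : EuclideanSpace ℝ (Fin p)) = 0 from
    fun ω => by simp [dotp], sub_zero] at hUt
  obtain ⟨x₁', hx₁'⟩ := eventually_atTop.mp hXt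
  obtain ⟨x₀', hx₀'⟩ := eventually_atTop.mp hUt
  set x₁ : ℝ := max x₁' 1 with hx₁def
  set x₀ : ℝ := max x₀' 1 with hx₀def
  set C : ℝ := max C0 1 with hCdef
  have hx₁1 : (1:ℝ) ≤ x₁ := le_max_right _ _
  have hx₀1 : (1:ℝ) ≤ x₀ := le_max_right _ _
  have hC1 : (1:ℝ) ≤ C := le_max_right _ _
  have hCpos : (0:ℝ) < C := lt_of_lt_of_le one_pos hC1
  have hx₁pos : (0:ℝ) < x₁ := lt_of_lt_of_le one_pos hx₁1
  have hx₀pos : (0:ℝ) < x₀ := lt_of_lt_of_le one_pos hx₀1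
  have hXtail' : ∀ x : ℝ, x₁ ≤ x → ∀ q : EuclideanSpace ℝ (Fin p), ‖q‖ = 1 →
      c₀ * x ^ (-c) ≤ (μ {ω | x < dotp (centV μ X ω) q}).toReal := by
    intro x hx q hq
    exact tail_lb (lt_of_lt_of_le hx₁pos hx)
      (hx₁' x (le_trans (le_max_left _ _) hx) q hq)
  have hUtail' : ∀ x : ℝ, x₀ ≤ x → (μ {ω | x < |cent μ Y ω|}).toReal ≤ C * x ^ (-d) := by
    intro x hx
    exact tail_ub (lt_of_lt_of_le hx₀pos hx)
      (le_trans (hx₀' x (le_trans (le_max_left _ _) hx)) (le_max_left _ _))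
  have hY0m : Measurable (cent μ Y) := hYm.sub_const _
  have hY0int : Integrable (cent μ Y) μ := by
    have h : MemLp (cent μ Y) 2 μ := hY2.sub (memLp_const (∫ ω', Y ω' ∂μ))
    exact h.integrable one_le_two
  have hWm : ∀ q : EuclideanSpace ℝ (Fin p), Measurable (fun ω => dotp (centV μ X ω) q) :=
    measurable_dotp_centV μ hXm
  by_cases hqex : ∃ q : EuclideanSpace ℝ (Fin p), ‖q‖ = 1
  swap
  · refine ⟨1, one_pos, 1/4, ⟨by norm_num, by norm_num⟩, fun ε hε hεb => ?_⟩
    have hBe : BepsSet μ Y X ε = ∅ := by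
      ext x
      simp only [BepsSet, mem_setOf_eq, mem_empty_iff_false, iff_false, not_exists]
      intro q l h
      exact absurd ⟨q, h.1⟩ hqex
    rw [hBe, Metric.hausdorffDist_empty]
    positivity
  obtain ⟨qex, hqex1⟩ := hqex
  have hc2 : 2 ≤ c := by
    by_contra hlt
    push_neg at hlt
    set V : ℝ := ∫ ω, (dotp (centV μ X ω) qex) ^ 2 ∂μ with hV
    have hVsq : Integrable (fun ω => (dotp (centV μ X ω) qex) ^ 2) μ :=
      (memℒp_dotp_centV μ hXm hX2 qex).integrable_sq
    have hV0 : 0 ≤ V := integral_nonneg fun ω => sq_nonneg _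
    set x : ℝ := max x₁ ((V / c₀ + 1) ^ (1 / (2 - c))) with hxdef
    have hxx₁ : x₁ ≤ x := le_max_left _ _
    have hx0 : (0:ℝ) < x := lt_of_lt_of_le hx₁pos hxx₁
    have hcheb : (μ {ω | x < dotp (centV μ X ω) qex}).toReal ≤ V / x ^ (2:ℝ) := by
      have hmar := mul_meas_ge_le_integral_of_nonneg
        (ae_of_all μ fun ω => sq_nonneg (dotp (centV μ X ω) qex)) hVsq (x ^ (2:ℝ))
      have hsub : {ω | x < dotp (centV μ X ω) qex}
          ⊆ {ω | x ^ (2:ℝ) ≤ (dotp (centV μ X ω) qex) ^ 2} := by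
        intro ω h
        simp only [mem_setOf_eq] at h ⊢
        rw [show x ^ (2:ℝ) = x ^ (2:ℕ) from Real.rpow_natCast x 2]
        nlinarith
      have hmono := ENNReal.toReal_mono (measure_ne_top μ _) (measure_mono hsub)
      rw [le_div_iff₀ (Real.rpow_pos_of_pos hx0 2)]
      calc (μ {ω | x < dotp (centV μ X ω) qex}).toReal * x ^ (2:ℝ)
          = x ^ (2:ℝ) * (μ {ω | x < dotp (centV μ X ω) qex}).toReal := by ring
        _ ≤ x ^ (2:ℝ) * (μ {ω | x ^ (2:ℝ) ≤ (dotp (centV μ X ω) qex) ^ 2}).toReal :=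
            mul_le_mul_of_nonneg_left hmono (Real.rpow_pos_of_pos hx0 2).le
        _ ≤ V := hmar
    have hlow := hXtail' x hxx₁ qex hqex1
    have hx2c : V / c₀ + 1 ≤ x ^ ((2:ℝ) - c) := by
      have hb0 : (0:ℝ) ≤ V / c₀ + 1 := by positivity
      calc V / c₀ + 1 = ((V / c₀ + 1) ^ (1 / (2 - c))) ^ ((2:ℝ) - c) := by
            rw [← Real.rpow_mul hb0, one_div, inv_mul_cancel₀ (by linarith : (2:ℝ) - c ≠ 0),
              Real.rpow_one]
        _ ≤ x ^ ((2:ℝ) - c) := Real.rpow_le_rpow (Real.rpow_nonneg hb0 _)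
            (le_max_right _ _) (by linarith)
    have hkey : c₀ * x ^ ((2:ℝ) - c) ≤ V := by
      have h1 := mul_le_mul_of_nonneg_right (le_trans hlow hcheb)
        (Real.rpow_pos_of_pos hx0 2).le
      have h2 : V / x ^ (2:ℝ) * x ^ (2:ℝ) = V :=
        div_mul_cancel₀ V (ne_of_gt (Real.rpow_pos_of_pos hx0 2))
      have h3 : c₀ * x ^ (-c) * x ^ (2:ℝ) = c₀ * x ^ ((2:ℝ) - c) := by
        rw [mul_assoc, ← Real.rpow_add hx0, show -c + 2 = (2:ℝ) - c by ring]
      rw [h2, h3] at h1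
      exact h1
    have hfin : c₀ * (V / c₀ + 1) ≤ V :=
      le_trans (mul_le_mul_of_nonneg_left hx2c hc₀.le) hkey
    rw [mul_add, mul_one, mul_div_cancel₀ _ (ne_of_gt hc₀)] at hfin
    linarith
  have hd1 : (1:ℝ) < d := by linarith
  have hc1 : (1:ℝ) < c := by linarith
  have hcne : c ≠ 0 := by linarith
  have hdne : d ≠ 0 := by linarith
  -- Step A : Bset ⊆ {0}
  have hBsub : Bset μ Y X ⊆ {0} := by
    intro β hβmem
    simp only [mem_singleton_iff]
    by_contra hβne
    have hnb0 : (0:ℝ) < ‖β‖ := norm_pos_iff.mpr hβne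
    set q : EuclideanSpace ℝ (Fin p) := (‖β‖⁻¹ : ℝ) • β with hqdef
    have hq1 : ‖q‖ = 1 := norm_smul_inv_norm hβne
    have hβq : β = ‖β‖ • q := by
      rw [hqdef, smul_smul, mul_inv_cancel₀ (ne_of_gt hnb0), one_smul]
    have hZW : ∀ ω, dotp (centV μ X ω) β = ‖β‖ * dotp (centV μ X ω) q := by
      intro ω
      conv_lhs => rw [hβq]
      exact dotp_smul_right _ _ _
    set C₂ : ℝ := C * (d / (d - 1)) with hC₂
    have hC₂pos : 0 < C₂ := mul_pos hCpos (div_pos (by linarith) (by linarith))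
    set K : ℝ := c₀ * (2 / ‖β‖) ^ (-c) with hK
    have hKpos : 0 < K := mul_pos hc₀ (Real.rpow_pos_of_pos (by positivity) _)
    set a : ℝ := max (max (max x₀ (‖β‖ * x₁)) 1) ((C₂ / K + 1) ^ (1 / (d - c))) with ha
    have ha1 : (1:ℝ) ≤ a := le_trans (le_max_right _ _) (le_max_left _ _)
    have ha0 : (0:ℝ) < a := lt_of_lt_of_le one_pos ha1
    have hax₀ : x₀ ≤ a :=
      le_trans (le_trans (le_max_left _ _) (le_max_left _ _)) (le_max_left _ _)
    have hax₁ : ‖β‖ * x₁ ≤ a :=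
      le_trans (le_trans (le_max_right _ _) (le_max_left _ _)) (le_max_left _ _)
    set φ : ℝ → ℝ := fun x => max (x - a) 0 with hφ
    have hφY : Integrable (fun ω => φ (cent μ Y ω)) μ := by
      refine Integrable.mono' (g := fun ω => |cent μ Y ω| + |a|)
        (hY0int.abs.add (integrable_const _))
        ((hY0m.sub_const a).max measurable_const).aestronglyMeasurable
        (ae_of_all _ fun ω => ?_)
      rw [Real.norm_eq_abs, abs_of_nonneg (le_max_right _ _)]
      show max (cent μ Y ω - a) 0 ≤ |cent μ Y ω| + |a|
      refine max_le ?_ (by positivity)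
      have h1 := le_abs_self (cent μ Y ω)
      have h2 := neg_le_abs a
      linarith
    obtain ⟨hZint, hZle⟩ := hβmem φ (convexOn_hinge a) hφY
    have hmar := mul_meas_ge_le_integral_of_nonneg
      (ae_of_all μ fun ω => le_max_right (dotp (centV μ X ω) β - a) 0) hZint a
    have hss : {ω | 2 * a / ‖β‖ < dotp (centV μ X ω) q}
        ⊆ {ω | a ≤ φ (dotp (centV μ X ω) β)} := by
      intro ω h
      simp only [mem_setOf_eq] at h ⊢
      have h2 : 2 * a < dotp (centV μ X ω) β := by
        rw [hZW ω]
        calc 2 * a = ‖β‖ * (2 * a / ‖β‖) := by field_simp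
          _ < ‖β‖ * dotp (centV μ X ω) q := mul_lt_mul_of_pos_left h hnb0
      exact le_trans (by linarith) (le_max_left _ _)
    have hxa : x₁ ≤ 2 * a / ‖β‖ := by
      rw [le_div_iff₀ hnb0]
      nlinarith
    have h5 : c₀ * (2 * a / ‖β‖) ^ (-c)
        ≤ (μ {ω | a ≤ φ (dotp (centV μ X ω) β)}).toReal :=
      le_trans (hXtail' _ hxa q hq1)
        (ENNReal.toReal_mono (measure_ne_top μ _) (measure_mono hss))
    have h6 : a * (c₀ * (2 * a / ‖β‖) ^ (-c)) ≤ ∫ ω, φ (dotp (centV μ X ω) β) ∂μ :=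
      le_trans (mul_le_mul_of_nonneg_left h5 ha0.le) hmar
    have htailY : ∀ x : ℝ, a ≤ x → (μ {ω | x < cent μ Y ω}).toReal ≤ C * x ^ (-d) := by
      intro x hxa'
      refine le_trans (ENNReal.toReal_mono (measure_ne_top μ _)
        (measure_mono (fun ω h => ?_))) (hUtail' x (le_trans hax₀ hxa'))
      · simp only [mem_setOf_eq] at h ⊢
        exact lt_of_lt_of_le h (le_abs_self _)
    have h7 : ∫ ω, φ (cent μ Y ω) ∂μ ≤ C₂ * a ^ (1 - d) := by
      rw [hC₂]
      exact expectation_hinge_le μ hCpos hd1 ha1 hφY htailY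
    have h8 : a * (c₀ * (2 * a / ‖β‖) ^ (-c)) = K * a ^ (1 - c) := by
      rw [hK, show 2 * a / ‖β‖ = (2 / ‖β‖) * a by ring,
        Real.mul_rpow (by positivity) ha0.le,
        show (1:ℝ) - c = 1 + -c by ring, Real.rpow_add ha0, Real.rpow_one]
      ring
    have h9 : K * a ^ (1 - c) ≤ C₂ * a ^ (1 - d) := by
      rw [← h8]
      exact le_trans h6 (le_trans hZle h7)
    have h10 : K * a ^ (d - c) ≤ C₂ := by
      have hpos := Real.rpow_pos_of_pos ha0 (1 - d)
      have h9' : K * a ^ (d - c) * a ^ (1 - d) ≤ C₂ * a ^ (1 - d) := by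
        rw [mul_assoc, ← Real.rpow_add ha0, show d - c + (1 - d) = 1 - c by ring]
        exact h9
      exact (mul_le_mul_iff_of_pos_right hpos).mp h9'
    have h11 : C₂ / K + 1 ≤ a ^ (d - c) := by
      have hb0 : (0:ℝ) ≤ C₂ / K + 1 := by positivity
      calc C₂ / K + 1 = ((C₂ / K + 1) ^ (1 / (d - c))) ^ (d - c) := by
            rw [← Real.rpow_mul hb0, one_div, inv_mul_cancel₀ (by linarith : d - c ≠ 0),
              Real.rpow_one]
        _ ≤ a ^ (d - c) := Real.rpow_le_rpow (Real.rpow_nonneg hb0 _)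
            (le_max_right _ _) (by linarith)
    have h13 : K * (C₂ / K + 1) ≤ C₂ :=
      le_trans (mul_le_mul_of_nonneg_left h11 hKpos.le) h10
    rw [mul_add, mul_one, mul_div_cancel₀ _ (ne_of_gt hKpos)] at h13
    linarith
  -- Step B constants
  set δ : ℝ := 1/c - 1/d with hδ
  have hδpos : 0 < δ := by
    rw [hδ, sub_pos]
    exact one_div_lt_one_div_of_lt (by linarith) hcd
  have h1c : 1/c < 1 := by rw [div_lt_one (by linarith)]; linarith
  have h1d : 1/d < 1 := by rw [div_lt_one (by linarith)]; linarith
  have h1cpos : 0 < 1/c := by positivity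
  have h1dpos : 0 < 1/d := by positivity
  set KD : ℝ := c₀ ^ (1/c) / (1 - 1/c) with hKD
  have hKDpos : 0 < KD := div_pos (Real.rpow_pos_of_pos hc₀ _) (by linarith)
  set KN : ℝ := C ^ (1/d) / (1 - 1/d) with hKN
  have hKNpos : 0 < KN := div_pos (Real.rpow_pos_of_pos hCpos _) (by linarith)
  set K₂ : ℝ := KN / KD + 1 with hK₂
  have hK₂pos : 0 < K₂ := by positivity
  set εb : ℝ := min (min (1/4) (C * x₀ ^ (-d))) (c₀ * x₁ ^ (-c) / 2) with hεbdef
  have hεbpos : 0 < εb := by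
    rw [hεbdef]
    refine lt_min (lt_min (by norm_num) (by positivity)) (by positivity)
  have hεb14 : εb ≤ 1/4 := le_trans (min_le_left _ _) (min_le_left _ _)
  have hεbC : εb ≤ C * x₀ ^ (-d) := le_trans (min_le_left _ _) (min_le_right _ _)
  have hεbc₀ : εb < c₀ * x₁ ^ (-c) :=
    lt_of_le_of_lt (min_le_right _ _) (half_lt_self (by positivity))
  refine ⟨K₂, hK₂pos, εb, ⟨hεbpos, by linarith⟩, ?_⟩
  intro ε hε hεεb
  -- cdf bound for directions
  have hGz : ∀ q : EuclideanSpace ℝ (Fin p), ‖q‖ = 1 → ∀ z : ℝ, x₁ ≤ z →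
      cdfRV μ (fun ω => dotp (centV μ X ω) q) z ≤ 1 - c₀ * z ^ (-c) := by
    intro q hq z hz
    have h1 := hXtail' z hz q hq
    rw [tail_toReal_eq μ (hWm q) z] at h1
    linarith
  have hG1 : ∀ q : EuclideanSpace ℝ (Fin p), ‖q‖ = 1 →
      qf (cdfRV μ (fun ω => dotp (centV μ X ω) q)) 1 = 0 := by
    intro q hq
    have hempty : {y : ℝ | (1:ℝ) ≤ cdfRV μ (fun ω => dotp (centV μ X ω) q) y} = ∅ := by
      ext y
      simp only [mem_setOf_eq, mem_empty_iff_false, iff_false, not_le]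
      have h1 : cdfRV μ (fun ω => dotp (centV μ X ω) q) y
          ≤ cdfRV μ (fun ω => dotp (centV μ X ω) q) (max y x₁) :=
        cdfRV_mono μ _ (le_max_left _ _)
      have h2 := hGz q hq (max y x₁) (le_max_right _ _)
      have hmp : (0:ℝ) < max y x₁ := lt_of_lt_of_le hx₁pos (le_max_right _ _)
      have h3 : 0 < c₀ * (max y x₁) ^ (-c) := by positivity
      linarith
    rw [qf, hempty, Real.sInf_empty]
  -- integral helpers
  have hIint : ∀ r : ℝ, 0 < r → r < 1 →
      IntervalIntegrable (fun t : ℝ => (1-t) ^ (-r)) volume (1-ε) 1 := by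
    intro r hr0 hr1
    have hbase : IntervalIntegrable (fun u : ℝ => u ^ (-r)) volume 0 ε :=
      intervalIntegrable_rpow' (by linarith)
    have h2 := hbase.comp_sub_left 1
    simp only [sub_zero] at h2
    exact h2.symm
  have hIcalc : ∀ r : ℝ, 0 < r → r < 1 →
      (∫ t in (1-ε)..1, (1-t) ^ (-r)) = ε ^ (1-r) / (1-r) := by
    intro r hr0 hr1
    have h1 := intervalIntegral.integral_comp_sub_left (a := 1-ε) (b := 1)
      (fun u : ℝ => u ^ (-r)) 1
    simp only [sub_self, sub_sub_cancel] at h1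
    rw [h1, integral_rpow (Or.inl (by linarith : (-1:ℝ) < -r)),
      show -r + 1 = 1 - r by ring, Real.zero_rpow (ne_of_gt (by linarith)), sub_zero]
  -- Seps bound
  have hSeps : ∀ q : EuclideanSpace ℝ (Fin p), ‖q‖ = 1 →
      Seps ε (cdfRV μ (cent μ Y)) (cdfRV μ (fun ω => dotp (centV μ X ω) q)) ≤ K₂ * ε ^ δ := by
    intro q hq
    set F : ℝ → ℝ := cdfRV μ (cent μ Y) with hF
    set G : ℝ → ℝ := cdfRV μ (fun ω => dotp (centV μ X ω) q) with hG
    have hε14 : ε ≤ 1/4 := le_trans hεεb hεb14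
    have hQF : ∀ t : ℝ, 1 - ε ≤ t → t < 1 → qf F t ≤ C ^ (1/d) * (1 - t) ^ (-(1/d)) := by
      intro t ht1 ht2
      have h1t : 0 < 1 - t := by linarith
      have h1tε : 1 - t ≤ ε := by linarith
      set x : ℝ := (C / (1 - t)) ^ (1/d) with hx
      have hCd : x₀ ^ d ≤ C / (1 - t) := by
        rw [le_div_iff₀ h1t]
        have h2 : 1 - t ≤ C * x₀ ^ (-d) := le_trans h1tε (le_trans hεεb hεbC)
        calc x₀ ^ d * (1 - t) ≤ x₀ ^ d * (C * x₀ ^ (-d)) :=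
              mul_le_mul_of_nonneg_left h2 (Real.rpow_nonneg hx₀pos.le _)
          _ = C * (x₀ ^ d * x₀ ^ (-d)) := by ring
          _ = C := by rw [← Real.rpow_add hx₀pos, add_neg_cancel, Real.rpow_zero, mul_one]
      have hxx₀ : x₀ ≤ x := by
        calc x₀ = (x₀ ^ d) ^ (1/d) := by
              rw [← Real.rpow_mul hx₀pos.le, mul_one_div, div_self hdne, Real.rpow_one]
          _ ≤ x := Real.rpow_le_rpow (Real.rpow_nonneg hx₀pos.le _) hCd (by positivity)
      have hx0 : 0 < x := lt_of_lt_of_le hx₀pos hxx₀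
      have hFx : t ≤ F x := by
        have h2 : (μ {ω | x < cent μ Y ω}).toReal ≤ C * x ^ (-d) := by
          refine le_trans (ENNReal.toReal_mono (measure_ne_top μ _)
            (measure_mono (fun ω h => ?_))) (hUtail' x hxx₀)
          · simp only [mem_setOf_eq] at h ⊢
            exact lt_of_lt_of_le h (le_abs_self _)
        have h4 : C * x ^ (-d) = 1 - t := by
          rw [hx, ← Real.rpow_mul (by positivity : (0:ℝ) ≤ C / (1 - t)),
            show 1/d * (-d) = (-1:ℝ) by field_simp,
            Real.rpow_neg_one, inv_div, mul_comm, div_mul_cancel₀ _ (ne_of_gt hCpos)]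
        rw [tail_toReal_eq μ hY0m x, h4] at h2
        rw [hF]
        linarith
      refine le_trans (qf_le_of_le_cdf hx0.le hFx) (le_of_eq ?_)
      rw [hx, Real.div_rpow hCpos.le h1t.le, Real.rpow_neg h1t.le, div_eq_mul_inv]
    have hQG : ∀ t : ℝ, 1 - ε ≤ t → t < 1 →
        c₀ ^ (1/c) * (1 - t) ^ (-(1/c)) ≤ qf G t := by
      intro t ht1 ht2
      have h1t : 0 < 1 - t := by linarith
      have h1tε : 1 - t ≤ ε := by linarith
      have h1tc₀ : 1 - t < c₀ * x₁ ^ (-c) := lt_of_le_of_lt (le_trans h1tε hεεb) hεbc₀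
      set xs : ℝ := (c₀ / (1 - t)) ^ (1/c) with hxs
      have hxspos : 0 < xs := Real.rpow_pos_of_pos (by positivity) _
      have heq : c₀ * xs ^ (-c) = 1 - t := by
        rw [hxs, ← Real.rpow_mul (by positivity : (0:ℝ) ≤ c₀ / (1 - t)),
          show 1/c * (-c) = (-1:ℝ) by field_simp,
          Real.rpow_neg_one, inv_div, mul_comm, div_mul_cancel₀ _ (ne_of_gt hc₀)]
      have hxsx₁ : x₁ < xs := by
        have h2 : x₁ ^ c < c₀ / (1 - t) := by
          rw [lt_div_iff₀ h1t]
          calc x₁ ^ c * (1 - t) < x₁ ^ c * (c₀ * x₁ ^ (-c)) :=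
                mul_lt_mul_of_pos_left h1tc₀ (Real.rpow_pos_of_pos hx₁pos _)
            _ = c₀ * (x₁ ^ c * x₁ ^ (-c)) := by ring
            _ = c₀ := by rw [← Real.rpow_add hx₁pos, add_neg_cancel, Real.rpow_zero, mul_one]
        calc x₁ = (x₁ ^ c) ^ (1/c) := by
              rw [← Real.rpow_mul hx₁pos.le, mul_one_div, div_self hcne, Real.rpow_one]
          _ < xs := Real.rpow_lt_rpow (Real.rpow_nonneg hx₁pos.le _) h2 (by positivity)
      have hle : c₀ ^ (1/c) * (1 - t) ^ (-(1/c)) = xs := by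
        rw [hxs, Real.div_rpow hc₀.le h1t.le, Real.rpow_neg h1t.le]
        exact (div_eq_mul_inv _ _).symm
      rw [hle]
      refine le_qf (exists_cdf_ge μ (hWm q) ht2) ?_
      intro y hy
      by_contra hlt
      push_neg at hlt
      have hGy : G y < t := by
        rcases lt_or_ge y x₁ with h | h
        · have ha1 : G y ≤ G x₁ := cdfRV_mono μ _ h.le
          have ha2 : G x₁ ≤ 1 - c₀ * x₁ ^ (-c) := hGz q hq x₁ le_rfl
          linarith
        · have ha2 : G y ≤ 1 - c₀ * y ^ (-c) := hGz q hq y h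
          have hy0 : 0 < y := lt_of_lt_of_le hx₁pos h
          have ha3 : xs ^ (-c) < y ^ (-c) :=
            Real.rpow_lt_rpow_of_neg hy0 hlt (by linarith)
          have ha4 : 1 - t < c₀ * y ^ (-c) := by
            rw [← heq]
            exact mul_lt_mul_of_pos_left ha3 hc₀
          linarith
      exact absurd hy (not_le.mpr hGy)
    have hε12 : ε ≤ 1 - ε := by linarith
    have hmem : Rratio (1-ε) F G ∈ {r | ∃ α ∈ Icc ε (1 - ε), r = Rratio α F G} :=
      ⟨1-ε, ⟨hε12, le_rfl⟩, rfl⟩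
    have hrle : Rratio (1-ε) F G ≤ K₂ * ε ^ δ := by
      by_cases hDi : IntervalIntegrable (qf G) volume (1-ε) 1
      · have hmono : ∀ t ∈ Icc (1-ε) 1, c₀ ^ (1/c) * (1-t) ^ (-(1/c)) ≤ qf G t := by
          intro t ht
          rcases eq_or_lt_of_le ht.2 with h | h
          · rw [h, sub_self, Real.zero_rpow (ne_of_lt (by linarith : -(1/c) < 0)), mul_zero,
              hG1 q hq]
          · exact hQG t ht.1 h
        have hmint : IntervalIntegrable (fun t : ℝ => c₀ ^ (1/c) * (1-t) ^ (-(1/c)))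
            volume (1-ε) 1 := (hIint (1/c) h1cpos h1c).const_mul _
        have hDlow : KD * ε ^ (1 - 1/c) ≤ ∫ t in (1-ε)..1, qf G t := by
          have h1 : (∫ t in (1-ε)..1, c₀ ^ (1/c) * (1-t) ^ (-(1/c)))
              ≤ ∫ t in (1-ε)..1, qf G t :=
            intervalIntegral.integral_mono_on (by linarith) hmint hDi hmono
          have h2 : (∫ t in (1-ε)..1, c₀ ^ (1/c) * (1-t) ^ (-(1/c)))
              = c₀ ^ (1/c) * (ε ^ (1 - 1/c) / (1 - 1/c)) := by
            rw [intervalIntegral.integral_const_mul, hIcalc (1/c) h1cpos h1c]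
          rw [h2] at h1
          refine le_trans (le_of_eq ?_) h1
          rw [hKD]
          ring
        have hDpos : 0 < ∫ t in (1-ε)..1, qf G t :=
          lt_of_lt_of_le (by positivity) hDlow
        have hNle : (∫ t in (1-ε)..1, qf F t) ≤ KN * ε ^ (1 - 1/d) := by
          by_cases hNi : IntervalIntegrable (qf F) volume (1-ε) 1
          · have hMint : IntervalIntegrable (fun t : ℝ => C ^ (1/d) * (1-t) ^ (-(1/d)))
                volume (1-ε) 1 := (hIint (1/d) h1dpos h1d).const_mul _
            have h1 : (∫ t in (1-ε)..1, qf F t)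
                ≤ ∫ t in (1-ε)..1, C ^ (1/d) * (1-t) ^ (-(1/d)) := by
              rw [intervalIntegral.integral_of_le (by linarith : 1-ε ≤ (1:ℝ)),
                intervalIntegral.integral_of_le (by linarith : 1-ε ≤ (1:ℝ)),
                integral_Ioc_eq_integral_Ioo, integral_Ioc_eq_integral_Ioo]
              refine setIntegral_mono_on (hNi.1.mono_set Ioo_subset_Ioc_self)
                (hMint.1.mono_set Ioo_subset_Ioc_self) measurableSet_Ioo ?_
              intro t ht
              exact hQF t ht.1.le ht.2
            have h2 : (∫ t in (1-ε)..1, C ^ (1/d) * (1-t) ^ (-(1/d)))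
                = C ^ (1/d) * (ε ^ (1 - 1/d) / (1 - 1/d)) := by
              rw [intervalIntegral.integral_const_mul, hIcalc (1/d) h1dpos h1d]
            rw [h2] at h1
            refine le_trans h1 (le_of_eq ?_)
            rw [hKN]
            ring
          · rw [intervalIntegral.integral_undef hNi]
            positivity
        show (∫ t in (1-ε)..1, qf F t) / (∫ t in (1-ε)..1, qf G t) ≤ K₂ * ε ^ δ
        rw [div_le_iff₀ hDpos]
        have hKK : K₂ * KD = KN + KD := by
          rw [hK₂, add_mul, div_mul_cancel₀ _ (ne_of_gt hKDpos), one_mul]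
        calc (∫ t in (1-ε)..1, qf F t)
            ≤ KN * ε ^ (1 - 1/d) := hNle
          _ ≤ (KN + KD) * ε ^ (1 - 1/d) := by
              have h3 := Real.rpow_nonneg hε.le (1 - 1/d)
              nlinarith
          _ = K₂ * KD * ε ^ (1 - 1/d) := by rw [hKK]
          _ = K₂ * ε ^ δ * (KD * ε ^ (1 - 1/c)) := by
              rw [show K₂ * ε ^ δ * (KD * ε ^ (1 - 1/c))
                  = K₂ * KD * (ε ^ δ * ε ^ (1 - 1/c)) by ring,
                ← Real.rpow_add hε, show δ + (1 - 1/c) = 1 - 1/d by rw [hδ]; ring]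
          _ ≤ K₂ * ε ^ δ * ∫ t in (1-ε)..1, qf G t :=
              mul_le_mul_of_nonneg_left hDlow (by positivity)
      · show (∫ t in (1-ε)..1, qf F t) / (∫ t in (1-ε)..1, qf G t) ≤ K₂ * ε ^ δ
        rw [intervalIntegral.integral_undef hDi, div_zero]
        positivity
    by_cases hbdd : BddBelow {r | ∃ α ∈ Icc ε (1 - ε), r = Rratio α F G}
    · exact le_trans (csInf_le hbdd hmem) hrle
    · show sInf {r | ∃ α ∈ Icc ε (1 - ε), r = Rratio α F G} ≤ K₂ * ε ^ δ
      rw [Real.sInf_of_not_bddBelow hbdd]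
      positivity
  -- Step C : Hausdorff distance
  rcases eq_empty_or_nonempty (Bset μ Y X) with hBem | hBne
  · rw [hBem, Metric.hausdorffDist_empty']
    positivity
  · have h0B : (0 : EuclideanSpace ℝ (Fin p)) ∈ Bset μ Y X := by
      obtain ⟨b, hb⟩ := hBne
      have hb0 : b = 0 := Set.mem_singleton_iff.mp (hBsub hb)
      rwa [hb0] at hb
    rcases eq_empty_or_nonempty (BepsSet μ Y X ε) with hBe | hBeN
    · rw [hBe, Metric.hausdorffDist_empty]
      positivity
    · have hbound : ∀ y ∈ BepsSet μ Y X ε,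
          dist (0 : EuclideanSpace ℝ (Fin p)) y ≤ K₂ * ε ^ δ := by
        intro y hy
        obtain ⟨qy, ly, hqy, hly0, hlyS, hyeq⟩ := hy
        rw [hyeq, dist_zero_left, norm_smul, hqy, mul_one, Real.norm_eq_abs,
          abs_of_nonneg hly0]
        exact le_trans hlyS (hSeps qy hqy)
      refine Metric.hausdorffDist_le_of_mem_dist (by positivity) ?_ ?_
      · intro x hx
        have hx0 : x = 0 := Set.mem_singleton_iff.mp (hBsub hx)
        obtain ⟨y, hy⟩ := hBeN
        exact ⟨y, hy, by rw [hx0]; exact hbound y hy⟩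
      · intro y hy
        refine ⟨0, h0B, ?_⟩
        rw [dist_comm]
        exact hbound y hy

end
end

section
/- Fix ε ∈ (0, 1/2) and let D denote the set of cumulative distribution functions of integrable, mean-zero, nondegenerate probability distributions on ℝ. Then the map (α, F, G) ↦ R(α, F, G) = (∫_α^1 F⁻¹(t) dt)/(∫_α^1 G⁻¹(t) dt) is continuous on [ε, 1−ε] × D × D with respect to the metric d'((α, F, G), (α', F', G')) = |α − α'| + W₁(F, F') + W₁(G, G'), where W₁ denotes the 1-Wasserstein distance between distributions on ℝ. -/
open MeasureTheory ProbabilityTheory Filter Set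

noncomputable section

/-- The cumulative distribution function of a Borel measure on `ℝ`. -/
def cdfM (ν : Measure ℝ) : ℝ → ℝ := fun t => (ν (Set.Iic t)).toReal

section AuxLemmas

variable (ν ν' : Measure ℝ) [IsProbabilityMeasure ν] [IsProbabilityMeasure ν']

lemma cdfM_eq : cdfM ν = ⇑(cdf ν) := by
  ext x; rw [cdfM, cdf_eq_real, measureReal_def]

lemma qf_set_nonempty {t : ℝ} (ht : t < 1) : {x | t ≤ cdfM ν x}.Nonempty := by
  rw [cdfM_eq]
  exact ((tendsto_cdf_atTop ν).eventually (eventually_ge_nhds ht)).exists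

lemma qf_set_bddBelow {t : ℝ} (ht : 0 < t) : BddBelow {x | t ≤ cdfM ν x} := by
  rw [cdfM_eq]
  obtain ⟨B, hB⟩ := eventually_atBot.1 ((tendsto_cdf_atBot ν).eventually (eventually_lt_nhds ht))
  exact ⟨B, fun x hx => le_of_not_gt fun h => absurd hx (not_le.2 (hB x h.le))⟩

/-- `t ≤ c (qf c t)` for `t ∈ (0,1)`, by right continuity. -/
lemma le_cdfM_qf {t : ℝ} (ht : t ∈ Set.Ioo (0:ℝ) 1) : t ≤ cdfM ν (qf (cdfM ν) t) := by
  set S := {x | t ≤ cdfM ν x} with hS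
  have hne : S.Nonempty := qf_set_nonempty ν ht.2
  have hbd : BddBelow S := qf_set_bddBelow ν ht.1
  have hm : qf (cdfM ν) t = sInf S := rfl
  rw [hm, cdfM_eq]
  have hrc : ContinuousWithinAt (cdf ν) (Ici (sInf S)) (sInf S) := (cdf ν).right_continuous _
  by_contra h
  push_neg at h
  have hev : {y | cdf ν y < t} ∈ nhdsWithin (sInf S) (Ici (sInf S)) :=
    hrc.eventually (eventually_lt_nhds h)
  rw [Metric.mem_nhdsWithin_iff] at hev
  obtain ⟨δ, hδ, hball⟩ := hev
  obtain ⟨x, hxS, hxlt⟩ := Real.lt_sInf_add_pos hne hδ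
  have hx1 : x ∈ Metric.ball (sInf S) δ ∩ Ici (sInf S) := by
    constructor
    · rw [Metric.mem_ball, Real.dist_eq, abs_lt]
      exact ⟨by linarith [csInf_le hbd hxS], by linarith⟩
    · exact csInf_le hbd hxS
  have h2 : cdf ν x < t := hball hx1
  have h3 : t ≤ cdf ν x := by rw [← cdfM_eq]; exact hxS
  linarith

/-- Galois connection: for `t ∈ (0,1)`, `qf c t ≤ x ↔ t ≤ c x`. -/
lemma qf_le_iff {t x : ℝ} (ht : t ∈ Set.Ioo (0:ℝ) 1) :
    qf (cdfM ν) t ≤ x ↔ t ≤ cdfM ν x := by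
  constructor
  · intro h
    calc t ≤ cdfM ν (qf (cdfM ν) t) := le_cdfM_qf ν ht
    _ ≤ cdfM ν x := by
        have := (cdf ν).mono h
        simpa [cdfM_eq] using this
  · intro h
    exact csInf_le (qf_set_bddBelow ν ht.1) h

lemma qf_monotoneOn : MonotoneOn (qf (cdfM ν)) (Set.Ioo (0:ℝ) 1) := by
  intro s hs t ht hst
  exact le_csInf (qf_set_nonempty ν ht.2) fun x hx =>
    csInf_le (qf_set_bddBelow ν hs.1) (le_trans hst hx)

/-- The pushforward of Lebesgue measure on `(0,1)` under the quantile function is `ν`. -/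
lemma qf_aemeasurable :
    AEMeasurable (qf (cdfM ν)) (volume.restrict (Set.Ioo (0:ℝ) 1)) := by
  exact aemeasurable_restrict_of_monotoneOn measurableSet_Ioo (qf_monotoneOn ν)

lemma map_qf :
    (volume.restrict (Set.Ioo (0:ℝ) 1)).map (qf (cdfM ν)) = ν := by
  have hae := qf_aemeasurable ν
  refine Measure.ext_of_Iic _ _ fun x => ?_
  rw [Measure.map_apply_of_aemeasurable hae measurableSet_Iic,
    Measure.restrict_apply₀ (hae.nullMeasurable measurableSet_Iic)]
  have hset : qf (cdfM ν) ⁻¹' Set.Iic x ∩ Set.Ioo 0 1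
      = {t | t ≤ cdfM ν x} ∩ Set.Ioo 0 1 := by
    ext t
    simp only [mem_inter_iff, mem_preimage, mem_Iic, mem_setOf_eq, and_congr_left_iff]
    intro htI
    exact qf_le_iff ν htI
  rw [hset]
  have h0 : 0 ≤ cdfM ν x := ENNReal.toReal_nonneg
  have h1 : cdfM ν x ≤ 1 := by
    rw [cdfM_eq]; exact cdf_le_one ν x
  have heq : {t | t ≤ cdfM ν x} ∩ Set.Ioo (0:ℝ) 1 = Set.Iic (cdfM ν x) ∩ Set.Ioo 0 1 := rfl
  rw [heq]
  have hle : volume (Set.Iic (cdfM ν x) ∩ Set.Ioo (0:ℝ) 1) ≤ ENNReal.ofReal (cdfM ν x) := by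
    have : Set.Iic (cdfM ν x) ∩ Set.Ioo (0:ℝ) 1 ⊆ Set.Ioc 0 (cdfM ν x) := fun t ht =>
      ⟨ht.2.1, ht.1⟩
    exact le_trans (measure_mono this) (by rw [Real.volume_Ioc, sub_zero])
  have hge : ENNReal.ofReal (cdfM ν x) ≤ volume (Set.Iic (cdfM ν x) ∩ Set.Ioo (0:ℝ) 1) := by
    have : Set.Ioo 0 (cdfM ν x) ⊆ Set.Iic (cdfM ν x) ∩ Set.Ioo (0:ℝ) 1 := fun t ht =>
      ⟨ht.2.le, ht.1, lt_of_lt_of_le ht.2 h1⟩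
    exact le_trans (by rw [Real.volume_Ioo, sub_zero]) (measure_mono this)
  rw [le_antisymm hle hge]
  rw [← ofReal_cdf ν x, cdfM_eq]

lemma cdfM_mono : Monotone (cdfM ν) := by
  rw [cdfM_eq]; exact (cdf ν).mono

lemma cdfM_measurable : Measurable (cdfM ν) := (cdfM_mono ν).measurable

lemma cdfM_nonneg (x : ℝ) : 0 ≤ cdfM ν x := ENNReal.toReal_nonneg

lemma cdfM_le_one (x : ℝ) : cdfM ν x ≤ 1 := by
  rw [cdfM_eq]; exact cdf_le_one ν x

lemma qf_integrableOn (hint : Integrable (fun x => x) ν) :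
    IntegrableOn (qf (cdfM ν)) (Set.Ioo (0:ℝ) 1) := by
  have hgm : AEStronglyMeasurable (fun x => x : ℝ → ℝ)
      ((volume.restrict (Set.Ioo (0:ℝ) 1)).map (qf (cdfM ν))) := by
    rw [map_qf ν]; exact hint.1
  have h := hint
  rw [← map_qf ν] at h
  have := (integrable_map_measure hgm (qf_aemeasurable ν)).1 h
  exact this

lemma integral_qf (hint : Integrable (fun x => x) ν) :
    ∫ t in Set.Ioo (0:ℝ) 1, qf (cdfM ν) t = ∫ x, x ∂ν := by
  have hgm : AEStronglyMeasurable (fun x => x : ℝ → ℝ)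
      ((volume.restrict (Set.Ioo (0:ℝ) 1)).map (qf (cdfM ν))) := by
    rw [map_qf ν]; exact hint.1
  have h := integral_map (qf_aemeasurable ν) hgm
  rw [map_qf ν] at h
  exact h.symm

private lemma ofReal_add_ofReal_neg (a b : ℝ) :
    ENNReal.ofReal (a - b) + ENNReal.ofReal (b - a) = ENNReal.ofReal |a - b| := by
  rcases le_total b a with h | h
  · rw [ENNReal.ofReal_eq_zero.2 (by linarith : b - a ≤ 0), add_zero,
      abs_of_nonneg (by linarith : (0:ℝ) ≤ a - b)]
  · rw [ENNReal.ofReal_eq_zero.2 (by linarith : a - b ≤ 0), zero_add,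
      abs_of_nonpos (by linarith : a - b ≤ 0), neg_sub]

private lemma disj_Ico (a b : ℝ) : Disjoint (Set.Ico a b) (Set.Ico b a) :=
  Set.disjoint_left.2 fun _ hx hx' => absurd hx'.1 (not_le.2 hx.2)

/-- Key lemma (Tonelli): `∫₀¹ |F⁻¹ − G⁻¹| = ∫ℝ |F − G|` at the level of lintegrals. -/
lemma lintegral_qf_sub_eq :
    ∫⁻ t in Set.Ioo (0:ℝ) 1, ENNReal.ofReal |qf (cdfM ν) t - qf (cdfM ν') t|
      = ∫⁻ x, ENNReal.ofReal |cdfM ν x - cdfM ν' x| := by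
  set c := cdfM ν with hc
  set c' := cdfM ν' with hc'
  set ρ := volume.restrict (Set.Ioo (0:ℝ) 1) with hρ
  set S : Set (ℝ × ℝ) := {p | p.1 ≤ c p.2} with hSdef
  set S' : Set (ℝ × ℝ) := {p | p.1 ≤ c' p.2} with hS'def
  have hmS : MeasurableSet S :=
    measurableSet_le measurable_fst (((cdfM_measurable ν).comp measurable_snd : Measurable fun p : ℝ × ℝ => c p.2))
  have hmS' : MeasurableSet S' :=
    measurableSet_le measurable_fst (((cdfM_measurable ν').comp measurable_snd : Measurable fun p : ℝ × ℝ => c' p.2))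
  set A : Set (ℝ × ℝ) := (S \ S') ∪ (S' \ S) with hAdef
  have hmA : MeasurableSet A := ((hmS.diff hmS').union (hmS'.diff hmS))
  have h1 : (ρ.prod volume) A = ∫⁻ t in Set.Ioo (0:ℝ) 1,
      ENNReal.ofReal |qf c t - qf c' t| := by
    rw [Measure.prod_apply hmA, hρ]
    refine lintegral_congr_ae ((ae_restrict_mem measurableSet_Ioo).mono fun t ht => ?_)
    have hslice : Prod.mk t ⁻¹' A
        = (Set.Ici (qf c t) \ Set.Ici (qf c' t)) ∪ (Set.Ici (qf c' t) \ Set.Ici (qf c t)) := by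
      have e1 : ∀ x : ℝ, t ≤ c x ↔ qf c t ≤ x := fun x => (qf_le_iff ν ht).symm
      have e2 : ∀ x : ℝ, t ≤ c' x ↔ qf c' t ≤ x := fun x => (qf_le_iff ν' ht).symm
      ext x
      simp only [Set.mem_preimage, hAdef, Set.mem_union, Set.mem_diff, hSdef, hS'def,
        Set.mem_setOf_eq, Set.mem_Ici, e1, e2]
    show ℙ (Prod.mk t ⁻¹' A) = ENNReal.ofReal |qf c t - qf c' t|
    rw [hslice, Set.Ici_diff_Ici, Set.Ici_diff_Ici,
      measure_union (disj_Ico _ _) measurableSet_Ico,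
      Real.volume_Ico, Real.volume_Ico, ofReal_add_ofReal_neg, abs_sub_comm]
  have h2 : (ρ.prod volume) A = ∫⁻ x, ENNReal.ofReal |c x - c' x| := by
    rw [Measure.prod_apply_symm hmA]
    refine lintegral_congr fun x => ?_
    show ρ ((fun t => (t, x)) ⁻¹' A) = ENNReal.ofReal |c x - c' x|
    have hslice : (fun t => (t, x)) ⁻¹' A
        = (Set.Iic (c x) \ Set.Iic (c' x)) ∪ (Set.Iic (c' x) \ Set.Iic (c x)) := by
      ext t
      simp only [Set.mem_preimage, hAdef, Set.mem_union, Set.mem_diff, hSdef, hS'def,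
        Set.mem_setOf_eq, Set.mem_Iic]
    have hmT : MeasurableSet ((Set.Iic (c x) \ Set.Iic (c' x)) ∪ (Set.Iic (c' x) \ Set.Iic (c x))) := by
      measurability
    rw [hslice, hρ, Measure.restrict_apply hmT, Set.Iic_sdiff_Iic, Set.Iic_sdiff_Iic]
    -- squeeze between open and closed intervals
    have key : volume ((Set.Ioc (c' x) (c x) ∪ Set.Ioc (c x) (c' x)) ∩ Set.Ioo (0:ℝ) 1)
        = ENNReal.ofReal |c x - c' x| := by
      apply le_antisymm
      · refine le_trans (measure_mono Set.inter_subset_left) ?_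
        rw [measure_union (Set.disjoint_left.2 fun y hy hy' => absurd hy.2
            (not_le.2 hy'.1)) measurableSet_Ioc,
          Real.volume_Ioc, Real.volume_Ioc, ofReal_add_ofReal_neg]
      · have hsub : Set.Ioo (c' x) (c x) ∪ Set.Ioo (c x) (c' x)
            ⊆ (Set.Ioc (c' x) (c x) ∪ Set.Ioc (c x) (c' x)) ∩ Set.Ioo (0:ℝ) 1 := by
          rintro y (hy | hy)
          · exact ⟨Or.inl ⟨hy.1, hy.2.le⟩,
              lt_of_le_of_lt (cdfM_nonneg ν' _) hy.1, lt_of_lt_of_le hy.2 (cdfM_le_one ν _)⟩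
          · exact ⟨Or.inr ⟨hy.1, hy.2.le⟩,
              lt_of_le_of_lt (cdfM_nonneg ν _) hy.1, lt_of_lt_of_le hy.2 (cdfM_le_one ν' _)⟩
        refine le_trans ?_ (measure_mono hsub)
        rw [measure_union (Set.disjoint_left.2 fun y hy hy' => absurd hy.2
            (not_lt.2 hy'.1.le)) measurableSet_Ioo,
          Real.volume_Ioo, Real.volume_Ioo, ofReal_add_ofReal_neg]
    exact key
  rw [← h1, h2]

lemma integral_abs_qf_sub_eq :
    ∫ t in Set.Ioo (0:ℝ) 1, |qf (cdfM ν) t - qf (cdfM ν') t|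
      = ∫ x, |cdfM ν x - cdfM ν' x| := by
  rw [integral_eq_lintegral_of_nonneg_ae (f := fun t => |qf (cdfM ν) t - qf (cdfM ν') t|) (Filter.Eventually.of_forall fun t => abs_nonneg _)
      (((qf_aemeasurable ν).sub (qf_aemeasurable ν')).aestronglyMeasurable.norm.congr (Filter.Eventually.of_forall fun t => (Real.norm_eq_abs _))),
    integral_eq_lintegral_of_nonneg_ae (f := fun x => |cdfM ν x - cdfM ν' x|) (Filter.Eventually.of_forall fun x => abs_nonneg _)
      (((cdfM_measurable ν).sub (cdfM_measurable ν')).abs.aestronglyMeasurable),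
    lintegral_qf_sub_eq ν ν']

/-- `Ioc x y` is a.e. contained in `Ioo 0 1` when `0 ≤ x`, `y ≤ 1`. -/
lemma Ioc_ae_le_Ioo {x y : ℝ} (hx : 0 ≤ x) (hy : y ≤ 1) :
    (Set.Ioc x y : Set ℝ) ≤ᵐ[volume] Set.Ioo (0:ℝ) 1 := by
  rw [ae_le_set]
  refine measure_mono_null (fun t ht => ?_) (measure_singleton (1:ℝ))
  obtain ⟨⟨ht1, ht2⟩, ht3⟩ := ht
  simp only [Set.mem_singleton_iff]
  rcases lt_or_eq_of_le (ht2.trans hy) with h | h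
  · exact absurd ⟨lt_of_le_of_lt hx ht1, h⟩ ht3
  · exact h

lemma qf_intervalIntegrable (hint : Integrable (fun x => x) ν) {x y : ℝ}
    (hx : 0 ≤ x) (hx1 : x ≤ 1) (hy : 0 ≤ y) (hy1 : y ≤ 1) :
    IntervalIntegrable (qf (cdfM ν)) volume x y := by
  rw [intervalIntegrable_iff]
  refine (qf_integrableOn ν hint).mono_set_ae ?_
  rw [ae_le_set]
  refine measure_mono_null (fun t ht => ?_) (measure_singleton (1:ℝ))
  obtain ⟨ht0, ht3⟩ := ht
  have ht' : t ∈ Set.Ioc (x ⊓ y) (x ⊔ y) := ht0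
  simp only [Set.mem_singleton_iff]
  rcases lt_or_eq_of_le (ht'.2.trans (max_le hx1 hy1)) with h | h
  · exact absurd ⟨lt_of_le_of_lt (le_min hx hy) ht'.1, h⟩ ht3
  · exact h

lemma abs_intervalIntegral_qf_sub_le {a : ℝ} (ha : 0 < a) (ha1 : a ≤ 1)
    (hint : Integrable (fun x => x) ν) (hint' : Integrable (fun x => x) ν') :
    |(∫ t in a..1, qf (cdfM ν) t) - ∫ t in a..1, qf (cdfM ν') t|
      ≤ ∫ x, |cdfM ν x - cdfM ν' x| := by
  have hsub : (Set.Ioc a 1 : Set ℝ) ≤ᵐ[volume] Set.Ioo (0:ℝ) 1 := Ioc_ae_le_Ioo ha.le le_rfl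
  have hq : IntegrableOn (qf (cdfM ν)) (Set.Ioc a 1) volume :=
    (qf_integrableOn ν hint).mono_set_ae hsub
  have hq' : IntegrableOn (qf (cdfM ν')) (Set.Ioc a 1) volume :=
    (qf_integrableOn ν' hint').mono_set_ae hsub
  rw [intervalIntegral.integral_of_le ha1, intervalIntegral.integral_of_le ha1,
    ← integral_sub hq hq']
  rw [← Real.norm_eq_abs]
  refine le_trans (norm_integral_le_integral_norm _) ?_
  simp only [Real.norm_eq_abs]
  rw [← integral_abs_qf_sub_eq ν ν']
  exact setIntegral_mono_set ((qf_integrableOn ν hint).sub (qf_integrableOn ν' hint')).abs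
    (Filter.Eventually.of_forall fun t => abs_nonneg _) hsub

lemma shift_bound {e a a' : ℝ} (he : 0 < e) (he2 : e < 1/2)
    (ha : a ∈ Set.Icc e (1-e)) (ha' : a' ∈ Set.Icc e (1-e))
    (hint : Integrable (fun x => x) ν) :
    |(∫ t in a'..1, qf (cdfM ν) t) - ∫ t in a..1, qf (cdfM ν) t|
      ≤ (max |qf (cdfM ν) e| |qf (cdfM ν) (1-e)|) * |a - a'| := by
  have he1 : (0:ℝ) < 1 - e := by linarith
  have hb : ∀ z ∈ Set.Icc e (1-e), (0:ℝ) ≤ z ∧ z ≤ 1 :=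
    fun z hz => ⟨le_trans he.le hz.1, by linarith [hz.2]⟩
  obtain ⟨ha0, ha1⟩ := hb a ha
  obtain ⟨ha'0, ha'1⟩ := hb a' ha'
  have II1 : IntervalIntegrable (qf (cdfM ν)) volume a' a :=
    qf_intervalIntegrable ν hint ha'0 ha'1 ha0 ha1
  have II2 : IntervalIntegrable (qf (cdfM ν)) volume a 1 :=
    qf_intervalIntegrable ν hint ha0 ha1 zero_le_one le_rfl
  have hadd := intervalIntegral.integral_add_adjacent_intervals II1 II2
  have hdiff : (∫ t in a'..1, qf (cdfM ν) t) - ∫ t in a..1, qf (cdfM ν) t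
      = ∫ t in a'..a, qf (cdfM ν) t := by rw [← hadd]; ring
  rw [hdiff, ← Real.norm_eq_abs]
  have hbound : ∀ x ∈ Set.uIoc a' a, ‖qf (cdfM ν) x‖
      ≤ max |qf (cdfM ν) e| |qf (cdfM ν) (1-e)| := by
    intro x hx
    have hx' : x ∈ Set.Ioc (a' ⊓ a) (a' ⊔ a) := hx
    have hxe : e ≤ x := le_trans (le_min ha'.1 ha.1) hx'.1.le
    have hxe1 : x ≤ 1 - e := hx'.2.trans (max_le ha'.2 ha.2)
    have hmem : x ∈ Set.Ioo (0:ℝ) 1 := ⟨lt_of_lt_of_le he hxe, by linarith⟩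
    have heI : e ∈ Set.Ioo (0:ℝ) 1 := ⟨he, by linarith⟩
    have he1I : (1-e) ∈ Set.Ioo (0:ℝ) 1 := ⟨he1, by linarith⟩
    have h1 : qf (cdfM ν) e ≤ qf (cdfM ν) x := qf_monotoneOn ν heI hmem hxe
    have h2 : qf (cdfM ν) x ≤ qf (cdfM ν) (1-e) := qf_monotoneOn ν hmem he1I hxe1
    rw [Real.norm_eq_abs, abs_le]
    constructor
    · calc -(max |qf (cdfM ν) e| |qf (cdfM ν) (1-e)|) ≤ -|qf (cdfM ν) e| := by
            simp only [neg_le_neg_iff]; exact le_max_left _ _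
      _ ≤ qf (cdfM ν) e := neg_abs_le _
      _ ≤ qf (cdfM ν) x := h1
    · calc qf (cdfM ν) x ≤ qf (cdfM ν) (1-e) := h2
      _ ≤ |qf (cdfM ν) (1-e)| := le_abs_self _
      _ ≤ _ := le_max_right _ _
  exact intervalIntegral.norm_integral_le_of_norm_le_const hbound

lemma denom_pos {a : ℝ} (ha : a ∈ Set.Ioo (0:ℝ) 1) (hint : Integrable (fun x => x) ν)
    (hmean : (∫ x, x ∂ν) = 0) (hnd : ∀ r : ℝ, ν ≠ Measure.dirac r) :
    0 < ∫ t in a..1, qf (cdfM ν) t := by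
  set q := qf (cdfM ν) with hqdef
  have conv1 : ∫ t in a..1, q t = ∫ t in Set.Ioo a 1, q t := by
    rw [intervalIntegral.integral_of_le ha.2.le, setIntegral_congr_set Ioo_ae_eq_Ioc.symm]
  have conv0 : ∫ t in (0:ℝ)..a, q t = ∫ t in Set.Ioo 0 a, q t := by
    rw [intervalIntegral.integral_of_le ha.1.le, setIntegral_congr_set Ioo_ae_eq_Ioc.symm]
  have conv01 : ∫ t in (0:ℝ)..1, q t = ∫ t in Set.Ioo 0 1, q t := by
    rw [intervalIntegral.integral_of_le zero_le_one, setIntegral_congr_set Ioo_ae_eq_Ioc.symm]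
  have hsum : (∫ t in (0:ℝ)..a, q t) + ∫ t in a..1, q t = ∫ t in (0:ℝ)..1, q t :=
    intervalIntegral.integral_add_adjacent_intervals
      (qf_intervalIntegrable ν hint le_rfl zero_le_one ha.1.le ha.2.le)
      (qf_intervalIntegrable ν hint ha.1.le ha.2.le zero_le_one le_rfl)
  have h01 : ∫ t in (0:ℝ)..1, q t = 0 := by
    rw [conv01, hqdef, integral_qf ν hint, hmean]
  have hIoo0a : IntegrableOn q (Set.Ioo 0 a) volume :=
    (qf_integrableOn ν hint).mono_set (fun t ht => ⟨ht.1, ht.2.trans ha.2⟩)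
  have hIooa1 : IntegrableOn q (Set.Ioo a 1) volume :=
    (qf_integrableOn ν hint).mono_set (fun t ht => ⟨ha.1.trans ht.1, ht.2⟩)
  have hm := qf_monotoneOn ν
  have hmemIoo : ∀ t ∈ Set.Ioo a 1, t ∈ Set.Ioo (0:ℝ) 1 := fun t ht => ⟨ha.1.trans ht.1, ht.2⟩
  have hmemIoo0 : ∀ t ∈ Set.Ioo (0:ℝ) a, t ∈ Set.Ioo (0:ℝ) 1 := fun t ht =>
    ⟨ht.1, ht.2.trans ha.2⟩
  have hB : (1 - a) * q a ≤ ∫ t in Set.Ioo a 1, q t := by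
    have h := setIntegral_mono_on
      (integrableOn_const (by rw [Real.volume_Ioo]; exact ENNReal.ofReal_ne_top))
      hIooa1 measurableSet_Ioo (fun t ht => hm ha (hmemIoo t ht) ht.1.le)
    rwa [setIntegral_const, measureReal_def, Real.volume_Ioo,
      ENNReal.toReal_ofReal (by linarith [ha.2] : (0:ℝ) ≤ 1 - a), smul_eq_mul] at h
  have hA : ∫ t in Set.Ioo 0 a, q t ≤ a * q a := by
    have h := setIntegral_mono_on hIoo0a
      (integrableOn_const (by rw [Real.volume_Ioo]; exact ENNReal.ofReal_ne_top))
      measurableSet_Ioo (fun t ht => hm (hmemIoo0 t ht) ha ht.2.le)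
    rwa [setIntegral_const, measureReal_def, Real.volume_Ioo, sub_zero, ENNReal.toReal_ofReal ha.1.le,
      smul_eq_mul] at h
  rcases lt_or_ge (q a) 0 with hqa | hqa
  · have h1 : ∫ t in (0:ℝ)..a, q t ≤ a * q a := by rw [conv0]; exact hA
    have h2 : a * q a < 0 := mul_neg_of_pos_of_neg ha.1 hqa
    linarith
  · have hB0 : (0:ℝ) ≤ ∫ t in Set.Ioo a 1, q t :=
      le_trans (mul_nonneg (by linarith [ha.2]) hqa) hB
    rw [conv1]
    rcases lt_or_eq_of_le hB0 with h | hzero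
    · exact h
    · exfalso
      have hqnonneg : 0 ≤ᵐ[volume.restrict (Set.Ioo a 1)] q :=
        (ae_restrict_mem measurableSet_Ioo).mono fun t ht =>
          le_trans hqa (hm ha (hmemIoo t ht) ht.1.le)
      have heq1 : q =ᵐ[volume.restrict (Set.Ioo a 1)] (fun _ => (0:ℝ)) :=
        (integral_eq_zero_iff_of_nonneg_ae hqnonneg hIooa1).1 hzero.symm
      have hne : (volume.restrict (Set.Ioo a 1)) ≠ 0 := by
        intro h
        rw [Measure.restrict_eq_zero, Real.volume_Ioo, ENNReal.ofReal_eq_zero] at h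
        linarith [ha.2]
      haveI : (ae (volume.restrict (Set.Ioo a 1))).NeBot := ae_neBot.2 hne
      obtain ⟨t₀, ht₀q, ht₀mem⟩ := (heq1.and (ae_restrict_mem measurableSet_Ioo)).exists
      have hle0 : ∀ t ∈ Set.Ioo (0:ℝ) a, q t ≤ 0 := by
        intro t ht
        have h := hm (hmemIoo0 t ht) (hmemIoo t₀ ht₀mem) (le_of_lt (ht.2.trans ht₀mem.1))
        exact le_trans h (le_of_eq ht₀q)
      have hAzero : ∫ t in Set.Ioo 0 a, q t = 0 := by
        have h := hsum
        rw [h01, conv0, conv1, ← hzero] at h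
        linarith
      have heq0 : q =ᵐ[volume.restrict (Set.Ioo 0 a)] (fun _ => (0:ℝ)) := by
        have hnn : 0 ≤ᵐ[volume.restrict (Set.Ioo 0 a)] (fun t => - q t) :=
          (ae_restrict_mem measurableSet_Ioo).mono fun t ht => neg_nonneg.2 (hle0 t ht)
        have hint0 : Integrable (fun t => - q t) (volume.restrict (Set.Ioo 0 a)) := hIoo0a.neg
        have hz : (∫ t in Set.Ioo 0 a, - q t) = 0 := by rw [integral_neg, hAzero, neg_zero]
        have h := (integral_eq_zero_iff_of_nonneg_ae hnn hint0).1 hz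
        exact h.mono fun t ht => by simpa [neg_eq_zero] using ht
      have hcomb : q =ᵐ[volume.restrict (Set.Ioo (0:ℝ) 1)] (fun _ => (0:ℝ)) := by
        have hsub : Set.Ioo (0:ℝ) 1 ⊆ Set.Ioo 0 a ∪ ({a} ∪ Set.Ioo a 1) := by
          intro t ht
          rcases lt_trichotomy t a with h|h|h
          · exact Or.inl ⟨ht.1, h⟩
          · exact Or.inr (Or.inl (by simp [h]))
          · exact Or.inr (Or.inr ⟨h, ht.2⟩)
        have hle : volume.restrict (Set.Ioo (0:ℝ) 1)
            ≤ volume.restrict (Set.Ioo 0 a)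
              + (volume.restrict ({a} : Set ℝ) + volume.restrict (Set.Ioo a 1)) := by
          refine le_trans (Measure.restrict_mono hsub le_rfl) ?_
          refine le_trans (Measure.restrict_union_le _ _) ?_
          exact add_le_add le_rfl (Measure.restrict_union_le _ _)
        have hsing : volume.restrict ({a} : Set ℝ) = 0 := by
          rw [Measure.restrict_eq_zero]; exact measure_singleton a
        rw [Filter.EventuallyEq, ae_iff] at heq0 heq1 ⊢
        have hsum' := Measure.le_iff'.1 hle {t | ¬ q t = (0:ℝ)}
        simp only [Measure.coe_add, Pi.add_apply, heq0, heq1, hsing,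
          Measure.coe_zero, Pi.zero_apply, add_zero, zero_add] at hsum'
        exact le_antisymm hsum' (zero_le)
      have hdirac : ν = Measure.dirac 0 := by
        rw [← map_qf ν, ← hqdef, Measure.map_congr hcomb, Measure.map_const,
          Measure.restrict_apply_univ, Real.volume_Ioo, sub_zero, ENNReal.ofReal_one, one_smul]
      exact absurd hdirac (hnd 0)


end AuxLemmas

/-- The ratio of integrated quantiles `R(α, F, G)`, for measures. -/
def RM (α : ℝ) (ν₁ ν₂ : Measure ℝ) : ℝ :=
  (∫ t in α..1, qf (cdfM ν₁) t) / (∫ t in α..1, qf (cdfM ν₂) t)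

/-- The 1-Wasserstein distance between two distributions on `ℝ`, expressed as the
`L¹`-distance between their cdfs: `W₁(F, F') = ∫ |F(t) − F'(t)| dt`. -/
def W1 (ν ν' : Measure ℝ) : ℝ := ∫ t : ℝ, |cdfM ν t - cdfM ν' t|

/-- The set `D` of (cdfs of) integrable, mean-zero, nondegenerate distributions. -/
def Dset : Set (Measure ℝ) :=
  {ν | IsProbabilityMeasure ν ∧ Integrable (fun x => x) ν ∧ (∫ x, x ∂ν) = 0 ∧
    ∀ a : ℝ, ν ≠ Measure.dirac a}

set_option maxHeartbeats 2000000 in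
/-- For fixed `ε ∈ (0, 1/2)`, the map `(α, F, G) ↦ R(α, F, G)` is
continuous on `[ε, 1-ε] × D × D` with respect to the metric
`d'((α,F,G), (α',F',G')) = |α - α'| + W₁(F,F') + W₁(G,G')`. -/
theorem stmt17 (ε : ℝ) (hε : ε ∈ Set.Ioo (0:ℝ) (1/2)) :
    ∀ α : ℝ, ∀ F G : Measure ℝ, α ∈ Set.Icc ε (1 - ε) → F ∈ Dset → G ∈ Dset →
      ∀ η : ℝ, 0 < η → ∃ δ : ℝ, 0 < δ ∧
        ∀ α' : ℝ, ∀ F' G' : Measure ℝ,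
          α' ∈ Set.Icc ε (1 - ε) → F' ∈ Dset → G' ∈ Dset →
          |α - α'| + W1 F F' + W1 G G' < δ →
          |RM α' F' G' - RM α F G| < η := by
  obtain ⟨hε0, hε2⟩ := hε
  intro α F G hα hF hG η hη
  obtain ⟨hFp, hFi, hFm, hFnd⟩ := hF
  obtain ⟨hGp, hGi, hGm, hGnd⟩ := hG
  haveI := hFp; haveI := hGp
  have hαIoo : α ∈ Set.Ioo (0:ℝ) 1 := ⟨lt_of_lt_of_le hε0 hα.1, by linarith [hα.2]⟩
  set NF := ∫ t in α..1, qf (cdfM F) t with hNFdef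
  set NG := ∫ t in α..1, qf (cdfM G) t with hNGdef
  have hd : 0 < NG := denom_pos G hαIoo hGi hGm hGnd
  set MF := max |qf (cdfM F) ε| |qf (cdfM F) (1-ε)| with hMFdef
  set MG := max |qf (cdfM G) ε| |qf (cdfM G) (1-ε)| with hMGdef
  have hMF0 : 0 ≤ MF := le_trans (abs_nonneg _) (le_max_left _ _)
  have hMG0 : 0 ≤ MG := le_trans (abs_nonneg _) (le_max_left _ _)
  set K := MF + MG + 1 with hKdef
  have hK0 : (0:ℝ) < K := by linarith
  refine ⟨min (NG/(2*K)) (η * NG * NG/(4*K*(NG + |NF| + 1))),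
    lt_min (by positivity) (by positivity), ?_⟩
  set δ := min (NG/(2*K)) (η * NG * NG/(4*K*(NG + |NF| + 1))) with hδdef
  intro α' F' G' hα' hF' hG' hdist
  obtain ⟨hF'p, hF'i, hF'm, hF'nd⟩ := hF'
  obtain ⟨hG'p, hG'i, hG'm, hG'nd⟩ := hG'
  haveI := hF'p; haveI := hG'p
  have hδ0 : 0 < δ := lt_min (by positivity) (by positivity)
  have hW1F0 : 0 ≤ W1 F F' := integral_nonneg fun t => abs_nonneg _
  have hW1G0 : 0 ≤ W1 G G' := integral_nonneg fun t => abs_nonneg _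
  have habs0 : 0 ≤ |α - α'| := abs_nonneg _
  have hα'Ioo : α' ∈ Set.Ioo (0:ℝ) 1 := ⟨lt_of_lt_of_le hε0 hα'.1, by linarith [hα'.2]⟩
  set NF' := ∫ t in α'..1, qf (cdfM F') t with hNF'def
  set NG' := ∫ t in α'..1, qf (cdfM G') t with hNG'def
  have hW1Flt : W1 F F' < δ := by linarith
  have hW1Glt : W1 G G' < δ := by linarith
  have hαlt : |α - α'| < δ := by linarith
  -- numerator estimate
  have e1 : |NF' - NF| < K * δ := by
    have t1 : |(∫ t in α'..1, qf (cdfM F) t) - NF'| ≤ W1 F F' :=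
      abs_intervalIntegral_qf_sub_le F F' hα'Ioo.1 hα'Ioo.2.le hFi hF'i
    have t2 : |(∫ t in α'..1, qf (cdfM F) t) - NF| ≤ MF * |α - α'| :=
      shift_bound F hε0 hε2 hα hα' hFi
    have t3 : |NF' - NF| ≤ W1 F F' + MF * |α - α'| := by
      calc |NF' - NF| ≤ |NF' - (∫ t in α'..1, qf (cdfM F) t)|
          + |(∫ t in α'..1, qf (cdfM F) t) - NF| := abs_sub_le _ _ _
      _ ≤ W1 F F' + MF * |α - α'| := add_le_add (by rw [abs_sub_comm]; exact t1) t2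
    have t4 : MF * |α - α'| ≤ MF * δ := mul_le_mul_of_nonneg_left hαlt.le hMF0
    nlinarith
  have e2 : |NG' - NG| < K * δ := by
    have t1 : |(∫ t in α'..1, qf (cdfM G) t) - NG'| ≤ W1 G G' :=
      abs_intervalIntegral_qf_sub_le G G' hα'Ioo.1 hα'Ioo.2.le hGi hG'i
    have t2 : |(∫ t in α'..1, qf (cdfM G) t) - NG| ≤ MG * |α - α'| :=
      shift_bound G hε0 hε2 hα hα' hGi
    have t3 : |NG' - NG| ≤ W1 G G' + MG * |α - α'| := by
      calc |NG' - NG| ≤ |NG' - (∫ t in α'..1, qf (cdfM G) t)|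
          + |(∫ t in α'..1, qf (cdfM G) t) - NG| := abs_sub_le _ _ _
      _ ≤ W1 G G' + MG * |α - α'| := add_le_add (by rw [abs_sub_comm]; exact t1) t2
    have t4 : MG * |α - α'| ≤ MG * δ := mul_le_mul_of_nonneg_left hαlt.le hMG0
    nlinarith
  -- freeze definitions
  have hRMa : RM α' F' G' = NF'/NG' := rfl
  have hRMb : RM α F G = NF/NG := rfl
  have hδmin : δ = min (NG/(2*K)) (η * NG * NG/(4*K*(NG + |NF| + 1))) := hδdef
  clear_value NF NG MF MG K δ NF' NG'
  -- denominator lower bound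
  have hδ1 : δ ≤ NG/(2*K) := by rw [hδmin]; exact min_le_left _ _
  have hKδ : K * δ ≤ NG/2 := by
    rw [le_div_iff₀ (by norm_num : (0:ℝ) < 2)]
    rw [le_div_iff₀ (by positivity : (0:ℝ) < 2*K)] at hδ1
    nlinarith
  have e3 : NG/2 < NG' := by
    obtain ⟨h1, h2⟩ := abs_lt.1 e2
    linarith
  have hNG'0 : 0 < NG' := by linarith
  -- final computation
  have hRM : RM α' F' G' - RM α F G = (NF' * NG - NF * NG')/(NG * NG') := by
    rw [hRMa, hRMb]
    field_simp
  rw [hRM, abs_div, abs_of_pos (mul_pos hd hNG'0), div_lt_iff₀ (mul_pos hd hNG'0)]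
  have key : |NF' * NG - NF * NG'| ≤ |NF' - NF| * NG + |NF| * |NG' - NG| := by
    have hr : NF' * NG - NF * NG' = (NF' - NF) * NG - NF * (NG' - NG) := by ring
    rw [hr]
    refine le_trans (abs_sub _ _) ?_
    rw [abs_mul, abs_mul, abs_of_pos hd]
  have hδ2 : δ * (4*K*(NG + |NF| + 1)) ≤ η * NG * NG := by
    have h : δ ≤ η * NG * NG/(4*K*(NG + |NF| + 1)) := by
      rw [hδmin]; exact min_le_right _ _
    rw [le_div_iff₀ (by positivity : (0:ℝ) < 4*K*(NG + |NF| + 1))] at h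
    exact h
  have s1 : |NF' - NF| * NG < (K*δ) * NG := mul_lt_mul_of_pos_right e1 hd
  have s2 : |NF| * |NG' - NG| ≤ |NF| * (K*δ) := mul_le_mul_of_nonneg_left e2.le (abs_nonneg NF)
  have s3 : η * NG * (NG/2) < η * NG * NG' :=
    mul_lt_mul_of_pos_left e3 (mul_pos hη hd)
  nlinarith [abs_nonneg NF, mul_pos hη hd, mul_pos hK0 hδ0]
end
end

section
/- Suppose X = X* + ξ_X with ξ_X independent of X*, and Y = Y* + ξ_Y with ξ_Y independent of (X*, Y*), where ξ_X and ξ_Y have finite means and Assumption 1 holds for (X*, Y*): E[(Y*)²] < ∞, E[‖X*‖²] < ∞, Var(Y*) > 0, Var(X*) nonsingular, and E[Y* | X*] = α₀ + X*'β₀. Let B* = {β ∈ ℝ^p : Y*₀ ⪰cx X*₀'β} and B = {β ∈ ℝ^p : Y₀ ⪰cx X₀'β}. If for every β ∈ B* one has ξ_{Y₀} ⪰cx ξ_{X₀}'β (centered measurement error on the outcome dominates, in the convex order, the centered measurement error on the linear index), then B* ⊆ B. -/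
open MeasureTheory ProbabilityTheory Filter Set

noncomputable section

variable {Ω : Type*} [MeasurableSpace Ω]

open scoped ENNReal

section AuxLemmas

variable {μ : Measure Ω} [IsProbabilityMeasure μ]

lemma convexOn_shift {φ : ℝ → ℝ} (hφ : ConvexOn ℝ univ φ) (e : ℝ) :
    ConvexOn ℝ univ (fun t => φ (t + e)) := by
  refine ⟨convex_univ, fun x _ y _ a b ha hb hab => ?_⟩
  have h : a • x + b • y + e = a • (x + e) + b • (y + e) := by
    simp only [smul_eq_mul]; linear_combination e * hab.symm
  show φ (a • x + b • y + e) ≤ a • φ (x + e) + b • φ (y + e)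
  rw [h]
  exact hφ.2 (mem_univ _) (mem_univ _) ha hb hab

lemma exists_affine_minorant {φ : ℝ → ℝ} (hφ : ConvexOn ℝ univ φ) :
    ∃ c d : ℝ, ∀ x, c + d * x ≤ φ x := by
  set S : Set ℝ := (fun y => (φ y - φ 0) / (y - 0)) '' Ioi 0 with hS
  have hne : S.Nonempty := ⟨_, ⟨1, mem_Ioi.2 one_pos, rfl⟩⟩
  have hlb : ∀ x < (0:ℝ), ∀ r ∈ S, (φ x - φ 0) / (x - 0) ≤ r := by
    intro x hx r hr
    obtain ⟨y, hy, rfl⟩ := hr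
    exact hφ.secant_mono (mem_univ 0) (mem_univ x) (mem_univ y) (ne_of_lt hx)
      (ne_of_gt (mem_Ioi.1 hy)) (le_of_lt (lt_trans hx (mem_Ioi.1 hy)))
  have hbdd : BddBelow S := ⟨(φ (-1) - φ 0) / (-1 - 0), fun r hr => hlb (-1) (by norm_num) r hr⟩
  refine ⟨φ 0, sInf S, fun x => ?_⟩
  rcases lt_trichotomy x 0 with hx | rfl | hx
  · have h1 : (φ x - φ 0) / (x - 0) ≤ sInf S := le_csInf hne (hlb x hx)
    rw [sub_zero] at h1
    have := (div_le_iff_of_neg hx).1 h1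
    linarith
  · simp
  · have h1 : sInf S ≤ (φ x - φ 0) / (x - 0) := csInf_le hbdd ⟨x, mem_Ioi.2 hx, rfl⟩
    rw [sub_zero] at h1
    have := (le_div_iff₀ hx).1 h1
    linarith

variable {μ : Measure Ω} [IsProbabilityMeasure μ]

lemma integrable_phi_iff {φ : ℝ → ℝ} (hφc : Continuous φ) {c d : ℝ}
    (hm : ∀ x, c + d * x ≤ φ x)
    {A : Ω → ℝ} (hA : AEMeasurable A μ) (hAi : Integrable A μ) :
    Integrable (fun ω => φ (A ω)) μ ↔
      ∫⁻ ω, ENNReal.ofReal (φ (A ω) - (c + d * A ω)) ∂μ ≠ ⊤ := by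
  have hmeas : AEStronglyMeasurable (fun ω => φ (A ω)) μ :=
    (hφc.measurable.comp_aemeasurable hA).aestronglyMeasurable
  have hlin : Integrable (fun ω => c + d * A ω) μ :=
    (integrable_const c).add (hAi.const_mul d)
  have hnn : 0 ≤ᵐ[μ] fun ω => φ (A ω) - (c + d * A ω) :=
    Eventually.of_forall fun ω => sub_nonneg.2 (hm (A ω))
  constructor
  · intro h
    have h2 : Integrable (fun ω => φ (A ω) - (c + d * A ω)) μ := h.sub hlin
    exact ne_of_lt ((hasFiniteIntegral_iff_ofReal hnn).1 h2.2)
  · intro h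
    have h2 : Integrable (fun ω => φ (A ω) - (c + d * A ω)) μ :=
      ⟨hmeas.sub hlin.1, (hasFiniteIntegral_iff_ofReal hnn).2 (lt_top_iff_ne_top.2 h)⟩
    have h3 : (fun ω => φ (A ω)) = fun ω => (φ (A ω) - (c + d * A ω)) + (c + d * A ω) := by
      funext ω; ring
    rw [h3]; exact h2.add hlin

lemma integral_phi_eq {φ : ℝ → ℝ} {c d : ℝ}
    (hm : ∀ x, c + d * x ≤ φ x)
    {A : Ω → ℝ} (hAi : Integrable A μ)
    (h : Integrable (fun ω => φ (A ω)) μ) :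
    ∫ ω, φ (A ω) ∂μ =
      (∫⁻ ω, ENNReal.ofReal (φ (A ω) - (c + d * A ω)) ∂μ).toReal
        + (c + d * ∫ ω, A ω ∂μ) := by
  have hlin : Integrable (fun ω => c + d * A ω) μ :=
    (integrable_const c).add (hAi.const_mul d)
  have hnn : 0 ≤ᵐ[μ] fun ω => φ (A ω) - (c + d * A ω) :=
    Eventually.of_forall fun ω => sub_nonneg.2 (hm (A ω))
  have h2 : Integrable (fun ω => φ (A ω) - (c + d * A ω)) μ := h.sub hlin
  have h3 := ofReal_integral_eq_lintegral_ofReal h2 hnn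
  have h4 : ∫ ω, (φ (A ω) - (c + d * A ω)) ∂μ =
      (∫⁻ ω, ENNReal.ofReal (φ (A ω) - (c + d * A ω)) ∂μ).toReal := by
    rw [← h3, ENNReal.toReal_ofReal (integral_nonneg_of_ae hnn)]
  have h5 : ∫ ω, (φ (A ω) - (c + d * A ω)) ∂μ
      = ∫ ω, φ (A ω) ∂μ - (c + d * ∫ ω, A ω ∂μ) := by
    rw [integral_sub h hlin, integral_add (integrable_const c) (hAi.const_mul d),
      integral_const, integral_const_mul]
    simp
  linarith [h4, h5]

lemma convexOrd_lintegral_le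
    {A B : Ω → ℝ} (hA : AEMeasurable A μ) (hB : AEMeasurable B μ)
    (hAi : Integrable A μ) (hBi : Integrable B μ)
    (hmean : ∫ ω, A ω ∂μ = ∫ ω, B ω ∂μ)
    (hord : ConvexOrdGE μ A B)
    {φ : ℝ → ℝ} (hφ : ConvexOn ℝ univ φ) {c d : ℝ} (hm : ∀ x, c + d * x ≤ φ x) :
    ∫⁻ ω, ENNReal.ofReal (φ (B ω) - (c + d * B ω)) ∂μ ≤
      ∫⁻ ω, ENNReal.ofReal (φ (A ω) - (c + d * A ω)) ∂μ := by
  have hφc : Continuous φ := continuousOn_univ.1 (hφ.continuousOn isOpen_univ)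
  by_cases hfin : ∫⁻ ω, ENNReal.ofReal (φ (A ω) - (c + d * A ω)) ∂μ = ⊤
  · rw [hfin]; exact le_top
  · have hintA : Integrable (fun ω => φ (A ω)) μ :=
      (integrable_phi_iff hφc hm hA hAi).2 hfin
    obtain ⟨hintB, hle⟩ := hord φ hφ hintA
    have hBfin := (integrable_phi_iff hφc hm hB hBi).1 hintB
    have eA := integral_phi_eq (μ := μ) hm hAi hintA
    have eB := integral_phi_eq (μ := μ) hm hBi hintB
    rw [← ENNReal.toReal_le_toReal hBfin hfin]
    rw [hmean] at eA
    linarith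

lemma lintegral_indep_decouple {γ : Type*} [MeasurableSpace γ]
    {U : Ω → ℝ} {V : Ω → γ} (hU : AEMeasurable U μ) (hV : AEMeasurable V μ)
    (hUV : IndepFun U V μ) {H : ℝ → γ → ℝ≥0∞} (hH : Measurable (Function.uncurry H)) :
    ∫⁻ ω, H (U ω) (V ω) ∂μ = ∫⁻ u, ∫⁻ v, H u v ∂(μ.map V) ∂(μ.map U) := by
  have hmap := (indepFun_iff_map_prod_eq_prod_map_map hU hV).1 hUV
  haveI : IsProbabilityMeasure (μ.map U) := Measure.isProbabilityMeasure_map hU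
  haveI : IsProbabilityMeasure (μ.map V) := Measure.isProbabilityMeasure_map hV
  have h1 : ∫⁻ ω, H (U ω) (V ω) ∂μ
      = ∫⁻ pr, Function.uncurry H pr ∂(μ.map fun ω => (U ω, V ω)) :=
    (lintegral_map' hH.aemeasurable (hU.prodMk hV)).symm
  rw [h1, hmap, lintegral_prod _ hH.aemeasurable]
  rfl

lemma lintegral_map_pullback {γ : Type*} [MeasurableSpace γ]
    {V : Ω → γ} (hV : AEMeasurable V μ) {G : γ → ℝ≥0∞} (hG : Measurable G) :
    ∫⁻ v, G v ∂(μ.map V) = ∫⁻ ω, G (V ω) ∂μ :=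
  lintegral_map' hG.aemeasurable hV

lemma convexOrd_lintegral_shift_le
    {A B : Ω → ℝ} (hA : AEMeasurable A μ) (hB : AEMeasurable B μ)
    (hAi : Integrable A μ) (hBi : Integrable B μ)
    (hmean : ∫ ω, A ω ∂μ = ∫ ω, B ω ∂μ) (hord : ConvexOrdGE μ A B)
    {φ : ℝ → ℝ} (hφ : ConvexOn ℝ univ φ) {c d : ℝ} (hm : ∀ x, c + d * x ≤ φ x) (e : ℝ) :
    ∫⁻ ω, ENNReal.ofReal (φ (B ω + e) - (c + d * (B ω + e))) ∂μ ≤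
      ∫⁻ ω, ENNReal.ofReal (φ (A ω + e) - (c + d * (A ω + e))) ∂μ := by
  have hφe := convexOn_shift hφ e
  have hme : ∀ x, (c + d * e) + d * x ≤ (fun t => φ (t + e)) x := fun x => by
    have := hm (x + e); linarith
  have h := convexOrd_lintegral_le hA hB hAi hBi hmean hord hφe hme
  convert h using 1 <;> exact lintegral_congr fun ω => by congr 1; ring

end AuxLemmas

/-- robustness to measurement error. If `X = X* + ξ_X` with
`ξ_X ⊥ X*`, `Y = Y* + ξ_Y` with `ξ_Y ⊥ (X*, Y*)`, Assumption 1 holds for `(X*, Y*)`,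
and for every `β` in the latent identified set `B*` the centered error `ξ_{Y₀}`
dominates `ξ_{X₀}'β` in the convex order, then `B* ⊆ B`. -/
theorem stmt18 (μ : Measure Ω) [IsProbabilityMeasure μ] {p : ℕ}
    (Ystar : Ω → ℝ) (Xstar : Ω → EuclideanSpace ℝ (Fin p))
    (ξY : Ω → ℝ) (ξX : Ω → EuclideanSpace ℝ (Fin p))
    (hYsm : Measurable Ystar) (hXsm : Measurable Xstar)
    (hξYm : Measurable ξY) (hξXm : Measurable ξX)
    (hξYint : Integrable ξY μ) (hξXint : Integrable ξX μ)
    -- measurement error structure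
    (hindX : IndepFun ξX Xstar μ)
    (hindY : IndepFun ξY (fun ω => (Xstar ω, Ystar ω)) μ)
    -- Assumption 1 for (X*, Y*)
    (hY2 : MemLp Ystar 2 μ) (hX2 : MemLp Xstar 2 μ)
    (hVarY : 0 < variance Ystar μ) (hVarX : (covMatrix μ Xstar).det ≠ 0)
    (α₀ : ℝ) (β₀ : EuclideanSpace ℝ (Fin p))
    (hmod : μ[Ystar | MeasurableSpace.comap Xstar inferInstance]
      =ᵐ[μ] fun ω => α₀ + dotp (Xstar ω) β₀)
    -- the measurement errors on the outcome dominate those on the index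
    (hdom : ∀ β ∈ Bset μ Ystar Xstar,
      ConvexOrdGE μ (cent μ ξY) (fun ω => dotp (centV μ ξX ω) β)) :
    Bset μ Ystar Xstar ⊆
      Bset μ (fun ω => Ystar ω + ξY ω) (fun ω => Xstar ω + ξX ω) := by
  intro β hβ
  classical
  have hYint : Integrable Ystar μ := hY2.integrable one_le_two
  have hXint : Integrable Xstar μ := hX2.integrable one_le_two
  have hXcoord : ∀ i, Integrable (fun ω => Xstar ω i) μ := fun i => by
    have := (EuclideanSpace.proj (𝕜 := ℝ) i).integrable_comp hXint; simpa using this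
  have hXmean : ∀ i, ∫ ω, Xstar ω i ∂μ = (∫ ω, Xstar ω ∂μ) i := fun i => by
    have := (EuclideanSpace.proj (𝕜 := ℝ) i).integral_comp_comm hXint; simpa using this
  have hξXcoord : ∀ i, Integrable (fun ω => ξX ω i) μ := fun i => by
    have := (EuclideanSpace.proj (𝕜 := ℝ) i).integrable_comp hξXint; simpa using this
  have hξXmean : ∀ i, ∫ ω, ξX ω i ∂μ = (∫ ω, ξX ω ∂μ) i := fun i => by
    have := (EuclideanSpace.proj (𝕜 := ℝ) i).integral_comp_comm hξXint; simpa using this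
  set f1 : Ω → ℝ := cent μ Ystar with hf1def
  set g1 : Ω → ℝ := cent μ ξY with hg1def
  set f2 : Ω → ℝ := fun ω => dotp (centV μ Xstar ω) β with hf2def
  set g2 : Ω → ℝ := fun ω => dotp (centV μ ξX ω) β with hg2def
  have hf2exp : f2 = fun ω => ∑ i, (Xstar ω i - (∫ ω', Xstar ω' ∂μ) i) * β i := by
    funext ω; simp [hf2def, dotp, centV]
  have hg2exp : g2 = fun ω => ∑ i, (ξX ω i - (∫ ω', ξX ω' ∂μ) i) * β i := by
    funext ω; simp [hg2def, dotp, centV]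
  -- measurability
  have hf1m : Measurable f1 := hYsm.sub_const _
  have hg1m : Measurable g1 := hξYm.sub_const _
  have hf2m : Measurable f2 := by
    rw [hf2exp]
    exact Finset.measurable_sum _ fun i _ =>
      (((measurable_pi_apply i).comp (((WithLp.measurable_ofLp _ _)).comp hXsm)).sub_const _).mul_const _
  have hg2m : Measurable g2 := by
    rw [hg2exp]
    exact Finset.measurable_sum _ fun i _ =>
      (((measurable_pi_apply i).comp (((WithLp.measurable_ofLp _ _)).comp hξXm)).sub_const _).mul_const _
  -- integrability
  have hf1i : Integrable f1 μ := hYint.sub (integrable_const _)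
  have hg1i : Integrable g1 μ := hξYint.sub (integrable_const _)
  have hf2i : Integrable f2 μ := by
    rw [hf2exp]
    exact integrable_finset_sum _ fun i _ =>
      ((hXcoord i).sub (integrable_const _)).mul_const _
  have hg2i : Integrable g2 μ := by
    rw [hg2exp]
    exact integrable_finset_sum _ fun i _ =>
      ((hξXcoord i).sub (integrable_const _)).mul_const _
  -- zero means
  have hf1mean : ∫ ω, f1 ω ∂μ = 0 := by
    rw [hf1def]
    simp [cent, integral_sub hYint (integrable_const _)]
  have hg1mean : ∫ ω, g1 ω ∂μ = 0 := by
    rw [hg1def]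
    simp [cent, integral_sub hξYint (integrable_const _)]
  have hf2mean : ∫ ω, f2 ω ∂μ = 0 := by
    have hsplit : ∫ ω, f2 ω ∂μ
        = ∑ i, ∫ ω, (Xstar ω i - (∫ ω', Xstar ω' ∂μ) i) * β i ∂μ := by
      rw [hf2exp]
      exact integral_finset_sum _ fun i _ =>
        ((hXcoord i).sub (integrable_const _)).mul_const _
    rw [hsplit]
    refine Finset.sum_eq_zero fun i _ => ?_
    rw [integral_mul_const, integral_sub (hXcoord i) (integrable_const _), integral_const]
    simp [hXmean i]
  have hg2mean : ∫ ω, g2 ω ∂μ = 0 := by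
    have hsplit : ∫ ω, g2 ω ∂μ
        = ∑ i, ∫ ω, (ξX ω i - (∫ ω', ξX ω' ∂μ) i) * β i ∂μ := by
      rw [hg2exp]
      exact integral_finset_sum _ fun i _ =>
        ((hξXcoord i).sub (integrable_const _)).mul_const _
    rw [hsplit]
    refine Finset.sum_eq_zero fun i _ => ?_
    rw [integral_mul_const, integral_sub (hξXcoord i) (integrable_const _), integral_const]
    simp [hξXmean i]
  -- transported order relations
  have hβ' : ConvexOrdGE μ f1 f2 := by rw [hf1def, hf2def]; exact hβ
  have hdom' : ConvexOrdGE μ g1 g2 := by rw [hg1def, hg2def]; exact hdom β hβ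
  -- independence facts
  have hInd1 : IndepFun g1 (fun ω => (f1 ω, f2 ω)) μ := by
    have hψ : Measurable (fun q : EuclideanSpace ℝ (Fin p) × ℝ =>
        (q.2 - ∫ ω, Ystar ω ∂μ, dotp (q.1 - ∫ ω, Xstar ω ∂μ) β)) := by
      refine Measurable.prodMk (measurable_snd.sub_const _) ?_
      have : (fun q : EuclideanSpace ℝ (Fin p) × ℝ => dotp (q.1 - ∫ ω, Xstar ω ∂μ) β)
          = fun q => ∑ i, (q.1 i - (∫ ω, Xstar ω ∂μ) i) * β i := by
        funext q; simp [dotp]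
      rw [this]
      exact Finset.measurable_sum _ fun i _ =>
        (((measurable_pi_apply i).comp ((WithLp.measurable_ofLp _ _).comp measurable_fst)).sub_const _).mul_const _
    exact hindY.comp (measurable_id.sub_const _) hψ
  have hInd2 : IndepFun f2 g1 μ :=
    (hInd1.comp measurable_id measurable_snd).symm
  have hInd3 : IndepFun f2 g2 μ := by
    have hψ1 : Measurable (fun v : EuclideanSpace ℝ (Fin p) =>
        dotp (v - ∫ ω, ξX ω ∂μ) β) := by
      have : (fun v : EuclideanSpace ℝ (Fin p) => dotp (v - ∫ ω, ξX ω ∂μ) β)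
          = fun v => ∑ i, (v i - (∫ ω, ξX ω ∂μ) i) * β i := by
        funext v; simp [dotp]
      rw [this]
      exact Finset.measurable_sum _ fun i _ =>
        (((measurable_pi_apply i).comp (WithLp.measurable_ofLp _ _)).sub_const _).mul_const _
    have hψ2 : Measurable (fun x : EuclideanSpace ℝ (Fin p) =>
        dotp (x - ∫ ω, Xstar ω ∂μ) β) := by
      have : (fun x : EuclideanSpace ℝ (Fin p) => dotp (x - ∫ ω, Xstar ω ∂μ) β)
          = fun x => ∑ i, (x i - (∫ ω, Xstar ω ∂μ) i) * β i := by
        funext x; simp [dotp]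
      rw [this]
      exact Finset.measurable_sum _ fun i _ =>
        (((measurable_pi_apply i).comp (WithLp.measurable_ofLp _ _)).sub_const _).mul_const _
    exact (hindX.comp hψ1 hψ2).symm
  -- rewrite the goal
  have hYeq : cent μ (fun ω => Ystar ω + ξY ω) = fun ω => f1 ω + g1 ω := by
    funext ω
    simp only [cent, integral_add hYint hξYint, hf1def, hg1def]
    ring
  have hXeq : (fun ω => dotp (centV μ (fun ω' => Xstar ω' + ξX ω') ω) β)
      = fun ω => f2 ω + g2 ω := by
    funext ω
    rw [hf2def, hg2def]
    simp only [centV, integral_add hXint hξXint, dotp]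
    rw [← Finset.sum_add_distrib]
    refine Finset.sum_congr rfl fun i _ => ?_
    simp only [PiLp.sub_apply, PiLp.add_apply]
    ring
  simp only [Bset, Set.mem_setOf_eq] at hβ ⊢
  rw [hYeq, hXeq]
  -- main convex-order argument
  intro φ hφ hintA
  obtain ⟨c, d, hm⟩ := exists_affine_minorant hφ
  have hφc : Continuous φ := continuousOn_univ.1 (hφ.continuousOn isOpen_univ)
  set h : ℝ → ℝ≥0∞ := fun t => ENNReal.ofReal (φ t - (c + d * t)) with hhdef
  have hhm : Measurable h :=
    ENNReal.measurable_ofReal.comp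
      (hφc.measurable.sub (measurable_const.add (measurable_id.const_mul d)))
  have hmean12 : ∫ ω, f1 ω ∂μ = ∫ ω, f2 ω ∂μ := by rw [hf1mean, hf2mean]
  have hmeang : ∫ ω, g1 ω ∂μ = ∫ ω, g2 ω ∂μ := by rw [hg1mean, hg2mean]
  -- step 1
  have step1 : ∫⁻ ω, h (f2 ω + g1 ω) ∂μ ≤ ∫⁻ ω, h (f1 ω + g1 ω) ∂μ := by
    have hVm : AEMeasurable (fun ω => (f1 ω, f2 ω)) μ := (hf1m.prodMk hf2m).aemeasurable
    have d1 := lintegral_indep_decouple (μ := μ) hg1m.aemeasurable hVm hInd1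
      (H := fun e v => h (v.2 + e)) (hhm.comp (measurable_snd.snd.add measurable_fst))
    have d2 := lintegral_indep_decouple (μ := μ) hg1m.aemeasurable hVm hInd1
      (H := fun e v => h (v.1 + e)) (hhm.comp (measurable_snd.fst.add measurable_fst))
    calc ∫⁻ ω, h (f2 ω + g1 ω) ∂μ
        = ∫⁻ e, ∫⁻ v, h (v.2 + e) ∂(μ.map fun ω => (f1 ω, f2 ω)) ∂(μ.map g1) := d1
      _ ≤ ∫⁻ e, ∫⁻ v, h (v.1 + e) ∂(μ.map fun ω => (f1 ω, f2 ω)) ∂(μ.map g1) := by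
          refine lintegral_mono fun e => ?_
          rw [lintegral_map_pullback (G := fun v : ℝ × ℝ => h (v.2 + e)) hVm
              (hhm.comp (measurable_snd.add_const e)),
            lintegral_map_pullback (G := fun v : ℝ × ℝ => h (v.1 + e)) hVm
              (hhm.comp (measurable_fst.add_const e))]
          exact convexOrd_lintegral_shift_le hf1m.aemeasurable hf2m.aemeasurable
            hf1i hf2i hmean12 hβ' hφ hm e
      _ = ∫⁻ ω, h (f1 ω + g1 ω) ∂μ := d2.symm
  -- step 2
  have step2 : ∫⁻ ω, h (f2 ω + g2 ω) ∂μ ≤ ∫⁻ ω, h (f2 ω + g1 ω) ∂μ := by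
    have d1 := lintegral_indep_decouple (μ := μ) hf2m.aemeasurable hg2m.aemeasurable hInd3
      (H := fun v e => h (v + e)) (hhm.comp (measurable_fst.add measurable_snd))
    have d2 := lintegral_indep_decouple (μ := μ) hf2m.aemeasurable hg1m.aemeasurable hInd2
      (H := fun v e => h (v + e)) (hhm.comp (measurable_fst.add measurable_snd))
    calc ∫⁻ ω, h (f2 ω + g2 ω) ∂μ
        = ∫⁻ v, ∫⁻ e, h (v + e) ∂(μ.map g2) ∂(μ.map f2) := d1
      _ ≤ ∫⁻ v, ∫⁻ e, h (v + e) ∂(μ.map g1) ∂(μ.map f2) := by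
          refine lintegral_mono fun v => ?_
          rw [lintegral_map_pullback (G := fun e : ℝ => h (v + e)) hg2m.aemeasurable
              (hhm.comp (measurable_const.add measurable_id)),
            lintegral_map_pullback (G := fun e : ℝ => h (v + e)) hg1m.aemeasurable
              (hhm.comp (measurable_const.add measurable_id))]
          have := convexOrd_lintegral_shift_le hg1m.aemeasurable hg2m.aemeasurable
            hg1i hg2i hmeang hdom' hφ hm v
          simpa [add_comm] using this
      _ = ∫⁻ ω, h (f2 ω + g1 ω) ∂μ := d2.symm
  -- conclude
  have hAi : Integrable (fun ω => f1 ω + g1 ω) μ := hf1i.add hg1i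
  have hBi : Integrable (fun ω => f2 ω + g2 ω) μ := hf2i.add hg2i
  have hAmean : ∫ ω, (f1 ω + g1 ω) ∂μ = 0 := by
    rw [integral_add hf1i hg1i, hf1mean, hg1mean]; ring
  have hBmean : ∫ ω, (f2 ω + g2 ω) ∂μ = 0 := by
    rw [integral_add hf2i hg2i, hf2mean, hg2mean]; ring
  have hAfin : ∫⁻ ω, h (f1 ω + g1 ω) ∂μ ≠ ⊤ :=
    (integrable_phi_iff hφc hm (hf1m.add hg1m).aemeasurable hAi).1 hintA
  have hchain : ∫⁻ ω, h (f2 ω + g2 ω) ∂μ ≤ ∫⁻ ω, h (f1 ω + g1 ω) ∂μ :=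
    le_trans step2 step1
  have hBfin : ∫⁻ ω, h (f2 ω + g2 ω) ∂μ ≠ ⊤ := ne_top_of_le_ne_top hAfin hchain
  have hintB : Integrable (fun ω => φ (f2 ω + g2 ω)) μ :=
    (integrable_phi_iff hφc hm (hf2m.add hg2m).aemeasurable hBi).2 hBfin
  refine ⟨hintB, ?_⟩
  rw [integral_phi_eq (μ := μ) hm hAi hintA, integral_phi_eq (μ := μ) hm hBi hintB,
    hAmean, hBmean]
  have := ENNReal.toReal_mono hAfin hchain
  linarith
end
end

section
/- Let F be a Borel probability measure on ℝ with finite first moment and G a Borel probability measure on ℝ × ℝ^p with finite first moment, and let G₁ denote the first (real-valued) marginal of G. Define W_w(F, G₁) as the infimum, over all pairs of random variables (U, V₁) defined on a common probability space with U ∼ F and V₁ ∼ G₁, of E[ |V₁ − E[U | V₁]| ], and define W_c(F, G) as the infimum, over all triples (U, V₁, V₂) on a common probability space with U ∼ F and (V₁, V₂) ∼ G, of E[ |V₁ − E[U | V₁, V₂]| ]. Then W_c(F, G) ≤ W_w(F, G₁). -/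
open MeasureTheory ProbabilityTheory Filter Set

noncomputable section

/-- `W_w(F, G₁)`: the infimum over couplings `(U, V₁)` on a common probability space,
with `U ∼ F` and `V₁ ∼ G₁`, of `E[|V₁ - E[U | V₁]|]`. -/
def Ww (F G₁ : Measure ℝ) : ℝ :=
  sInf {r | ∃ (Ω : Type) (_ : MeasurableSpace Ω) (μ : Measure Ω) (U V₁ : Ω → ℝ),
    IsProbabilityMeasure μ ∧ Measurable U ∧ Measurable V₁ ∧
    μ.map U = F ∧ μ.map V₁ = G₁ ∧
    r = ∫ ω, |V₁ ω - (μ[U | MeasurableSpace.comap V₁ inferInstance]) ω| ∂μ}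

/-- `W_c(F, G)`: the infimum over couplings `(U, V₁, V₂)` on a common probability
space, with `U ∼ F` and `(V₁, V₂) ∼ G`, of `E[|V₁ - E[U | V₁, V₂]|]`. -/
def Wc {p : ℕ} (F : Measure ℝ) (G : Measure (ℝ × EuclideanSpace ℝ (Fin p))) : ℝ :=
  sInf {r | ∃ (Ω : Type) (_ : MeasurableSpace Ω) (μ : Measure Ω) (U V₁ : Ω → ℝ)
      (V₂ : Ω → EuclideanSpace ℝ (Fin p)),
    IsProbabilityMeasure μ ∧ Measurable U ∧ Measurable V₁ ∧ Measurable V₂ ∧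
    μ.map U = F ∧ μ.map (fun ω => (V₁ ω, V₂ ω)) = G ∧
    r = ∫ ω, |V₁ ω -
        (μ[U | MeasurableSpace.comap (fun ω' => (V₁ ω', V₂ ω')) inferInstance]) ω| ∂μ}

/-- For `F` a Borel probability measure on `ℝ` and `G` a Borel
probability measure on `ℝ × ℝ^p`, both with finite first moments, and `G₁` the first
marginal of `G`, one has `W_c(F, G) ≤ W_w(F, G₁)`. -/
theorem stmt19 {p : ℕ} (F : Measure ℝ) (G : Measure (ℝ × EuclideanSpace ℝ (Fin p)))
    [IsProbabilityMeasure F] [IsProbabilityMeasure G]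
    (hF : Integrable (fun x => x) F) (hG : Integrable (fun x => ‖x‖) G) :
    Wc F G ≤ Ww F (G.map Prod.fst) := by
  classical
  have hG₁ : IsProbabilityMeasure (G.map Prod.fst) :=
    Measure.isProbabilityMeasure_map measurable_fst.aemeasurable
  -- Ww set nonempty
  have hne : {r | ∃ (Ω : Type) (_ : MeasurableSpace Ω) (μ : Measure Ω) (U V₁ : Ω → ℝ),
      IsProbabilityMeasure μ ∧ Measurable U ∧ Measurable V₁ ∧
      μ.map U = F ∧ μ.map V₁ = G.map Prod.fst ∧
      r = ∫ ω, |V₁ ω - (μ[U | MeasurableSpace.comap V₁ inferInstance]) ω| ∂μ}.Nonempty := by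
    refine ⟨_, ℝ × ℝ, inferInstance, F.prod (G.map Prod.fst), Prod.fst, Prod.snd,
      inferInstance, measurable_fst, measurable_snd, ?_, ?_, rfl⟩
    · exact Measure.fst_prod
    · exact Measure.snd_prod
  rw [Ww]
  refine le_csInf hne ?_
  rintro r ⟨Ω, mΩ, μ, U, V₁, hProb, hU, hV₁, hUF, hV₁G, hr⟩
  rw [Wc]
  have hbdd : BddBelow {r | ∃ (Ω : Type) (_ : MeasurableSpace Ω) (μ : Measure Ω)
      (U V₁ : Ω → ℝ) (V₂ : Ω → EuclideanSpace ℝ (Fin p)),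
      IsProbabilityMeasure μ ∧ Measurable U ∧ Measurable V₁ ∧ Measurable V₂ ∧
      μ.map U = F ∧ μ.map (fun ω => (V₁ ω, V₂ ω)) = G ∧
      r = ∫ ω, |V₁ ω -
        (μ[U | MeasurableSpace.comap (fun ω' => (V₁ ω', V₂ ω')) inferInstance]) ω| ∂μ} := by
    refine ⟨0, ?_⟩
    rintro x ⟨Ω, mΩ, μ, U, V₁, V₂, hProb, _, _, _, _, _, hx⟩
    rw [hx]
    exact integral_nonneg fun ω => abs_nonneg _
  refine csInf_le hbdd ?_
  -- Construct the coupling on Ω × E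
  set E := EuclideanSpace ℝ (Fin p) with hE
  set κ : Kernel ℝ E := G.condKernel with hκ
  set κ' : Kernel Ω E := κ.comap V₁ hV₁ with hκ'
  haveI : IsMarkovKernel κ' := by rw [hκ']; infer_instance
  set μ' : Measure (Ω × E) := μ.compProd κ' with hμ'
  haveI : IsProbabilityMeasure μ' := by rw [hμ']; infer_instance
  set Φ : Ω × E → ℝ × E := fun z => (V₁ z.1, z.2) with hΦdef
  have hΦ : Measurable Φ := (hV₁.comp measurable_fst).prodMk measurable_snd
  have hm : MeasurableSpace.comap V₁ inferInstance ≤ mΩ := hV₁.comap_le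
  have hm' : MeasurableSpace.comap Φ inferInstance
      ≤ (inferInstance : MeasurableSpace (Ω × E)) := hΦ.comap_le
  haveI : SigmaFinite (μ.trim hm) := inferInstance
  haveI : SigmaFinite (μ'.trim hm') := inferInstance
  set g : Ω → ℝ := μ[U | MeasurableSpace.comap V₁ inferInstance] with hg_def
  -- integrability of U
  have hUint : Integrable U μ := by
    have h1 : Integrable (fun x => x) (μ.map U) := hUF ▸ hF
    exact (integrable_map_measure aestronglyMeasurable_id hU.aemeasurable).mp h1
  have hfst : μ'.map Prod.fst = μ := Measure.fst_compProd μ κ'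
  -- U ∘ fst and g ∘ fst are integrable
  have int_fst : ∀ h : Ω → ℝ, Integrable h μ → Integrable (fun z : Ω × E => h z.1) μ' := by
    intro h hh
    have h1 : Integrable h (μ'.map Prod.fst) := hfst ▸ hh
    exact (integrable_map_measure (hfst ▸ hh.aestronglyMeasurable)
      measurable_fst.aemeasurable).mp h1
  have hgint : Integrable g μ := integrable_condExp
  -- key: set integrals over Φ⁻¹' A
  have key : ∀ (A : Set (ℝ × E)), MeasurableSet A → ∀ h : Ω → ℝ, Integrable h μ →
      ∫ z in Φ ⁻¹' A, h z.1 ∂μ' =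
        ∫ ω, h ω * (κ (V₁ ω) (Prod.mk (V₁ ω) ⁻¹' A)).toReal ∂μ := by
    intro A hA h hh
    have hsA : MeasurableSet (Φ ⁻¹' A) := hΦ hA
    have hind : Integrable ((Φ ⁻¹' A).indicator fun z : Ω × E => h z.1) μ' :=
      (int_fst h hh).indicator hsA
    rw [← integral_indicator hsA, Measure.integral_compProd hind]
    refine integral_congr_ae (Eventually.of_forall fun ω => ?_)
    have hsec : MeasurableSet (Prod.mk (V₁ ω) ⁻¹' A) := measurable_prodMk_left hA
    have heq : ∀ y : E, (Φ ⁻¹' A).indicator (fun z : Ω × E => h z.1) (ω, y)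
        = (Prod.mk (V₁ ω) ⁻¹' A).indicator (fun _ => h ω) y := by
      intro y
      by_cases hy : (V₁ ω, y) ∈ A
      · rw [Set.indicator_of_mem (by exact hy), Set.indicator_of_mem (by exact hy)]
      · rw [Set.indicator_of_notMem (by exact hy), Set.indicator_of_notMem (by exact hy)]
    show ∫ y, (Φ ⁻¹' A).indicator (fun z : Ω × E => h z.1) (ω, y) ∂(κ' ω)
        = h ω * (κ (V₁ ω) (Prod.mk (V₁ ω) ⁻¹' A)).toReal
    rw [integral_congr_ae (Eventually.of_forall heq), integral_indicator_const _ hsec]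
    have h6 : κ' ω (Prod.mk (V₁ ω) ⁻¹' A) = κ (V₁ ω) (Prod.mk (V₁ ω) ⁻¹' A) := by
      rw [hκ', Kernel.comap_apply]
    rw [measureReal_def, h6, smul_eq_mul, mul_comm]
  -- the pull-out property: ∫ U·w = ∫ g·w  for w(ω) = κ(V₁ ω)(...)
  have pull : ∀ (A : Set (ℝ × E)), MeasurableSet A →
      ∫ ω, U ω * (κ (V₁ ω) (Prod.mk (V₁ ω) ⁻¹' A)).toReal ∂μ =
      ∫ ω, g ω * (κ (V₁ ω) (Prod.mk (V₁ ω) ⁻¹' A)).toReal ∂μ := by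
    intro A hA
    set w : Ω → ℝ := fun ω => (κ (V₁ ω) (Prod.mk (V₁ ω) ⁻¹' A)).toReal with hw_def
    have hφmeas : Measurable fun x : ℝ => (κ x (Prod.mk x ⁻¹' A)).toReal := by
      have := Kernel.measurable_kernel_prodMk_left (κ := κ) hA
      exact this.ennreal_toReal
    have hwm : StronglyMeasurable[MeasurableSpace.comap V₁ inferInstance] w := by
      have hV₁m : Measurable[MeasurableSpace.comap V₁ inferInstance] V₁ :=
        fun s hs => ⟨s, hs, rfl⟩
      exact (hφmeas.comp hV₁m).stronglyMeasurable
    have hwbdd : ∃ C, ∀ ω, ‖w ω‖ ≤ C := by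
      refine ⟨1, fun ω => ?_⟩
      rw [hw_def, Real.norm_eq_abs, abs_of_nonneg ENNReal.toReal_nonneg]
      have h5 : κ (V₁ ω) (Prod.mk (V₁ ω) ⁻¹' A) ≤ 1 := prob_le_one
      exact ENNReal.toReal_le_of_le_ofReal zero_le_one (by simpa using h5)
    have hwU : Integrable (w * U) μ := hUint.bdd_mul (hwm.mono hm).aestronglyMeasurable (Eventually.of_forall hwbdd.choose_spec)
    have h1 : μ[w * U | MeasurableSpace.comap V₁ inferInstance]
        =ᵐ[μ] w * μ[U | MeasurableSpace.comap V₁ inferInstance] :=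
      condExp_mul_of_stronglyMeasurable_left hwm hwU hUint
    have h2 : ∫ ω, (w * U) ω ∂μ
        = ∫ ω, (μ[w * U | MeasurableSpace.comap V₁ inferInstance]) ω ∂μ :=
      (integral_condExp hm).symm
    calc ∫ ω, U ω * w ω ∂μ = ∫ ω, (w * U) ω ∂μ := by
          refine integral_congr_ae (Eventually.of_forall fun ω => ?_)
          simp [mul_comm]
      _ = ∫ ω, (μ[w * U | MeasurableSpace.comap V₁ inferInstance]) ω ∂μ := h2
      _ = ∫ ω, (w * μ[U | MeasurableSpace.comap V₁ inferInstance]) ω ∂μ :=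
          integral_congr_ae h1
      _ = ∫ ω, g ω * w ω ∂μ := by
          refine integral_congr_ae (Eventually.of_forall fun ω => ?_)
          simp [hg_def, mul_comm]
  -- the conditional expectation identity
  have hc : (fun z : Ω × E => g z.1)
      =ᵐ[μ'] μ'[(fun z : Ω × E => U z.1) | MeasurableSpace.comap Φ inferInstance] := by
    refine ae_eq_condExp_of_forall_setIntegral_eq hm' (int_fst U hUint) ?_ ?_ ?_
    · intro s hs _
      exact (int_fst g hgint).integrableOn
    · rintro s ⟨A, hA, rfl⟩ _
      rw [key A hA g hgint, key A hA U hUint, pull A hA]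
    · -- AEStronglyMeasurable' (g ∘ fst)
      have h1 : StronglyMeasurable[MeasurableSpace.comap V₁ inferInstance] g :=
        stronglyMeasurable_condExp
      have hfst_m : @Measurable (Ω × E) Ω (MeasurableSpace.comap Φ inferInstance)
          (MeasurableSpace.comap V₁ inferInstance) Prod.fst := by
        rw [measurable_iff_comap_le, MeasurableSpace.comap_comp]
        have hVfst : (V₁ ∘ Prod.fst : Ω × E → ℝ) = Prod.fst ∘ Φ := rfl
        rw [hVfst, ← MeasurableSpace.comap_comp]
        exact MeasurableSpace.comap_mono measurable_fst.comap_le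
      exact (h1.comp_measurable hfst_m).aestronglyMeasurable
  -- the pushforward identities
  have hU'F : μ'.map (fun z : Ω × E => U z.1) = F := by
    have h0 : (fun z : Ω × E => U z.1) = U ∘ Prod.fst := rfl
    rw [h0, ← Measure.map_map hU measurable_fst, hfst, hUF]
  have hΦG : μ'.map Φ = G := by
    have hGd : (G.map Prod.fst) ⊗ₘ κ = G := Measure.disintegrate G G.condKernel
    ext s hs
    rw [Measure.map_apply hΦ hs, ← hGd, Measure.compProd_apply hs,
      Measure.compProd_apply (hΦ hs), ← hV₁G,
      lintegral_map (Kernel.measurable_kernel_prodMk_left hs) hV₁]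
    refine lintegral_congr fun ω => ?_
    have h3 : κ' ω = κ (V₁ ω) := Kernel.comap_apply _ _ _
    rw [h3]
    rfl
  -- conclude membership
  refine ⟨Ω × E, inferInstance, μ', fun z => U z.1, fun z => V₁ z.1, Prod.snd,
    inferInstance, hU.comp measurable_fst, hV₁.comp measurable_fst, measurable_snd,
    hU'F, hΦG, ?_⟩
  have step1 : ∫ z, |V₁ z.1 -
        (μ'[(fun z : Ω × E => U z.1) | MeasurableSpace.comap Φ inferInstance]) z| ∂μ'
      = ∫ z, |V₁ z.1 - g z.1| ∂μ' := by
    refine integral_congr_ae ?_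
    filter_upwards [hc] with z hz
    rw [← hz]
  have step2 : ∫ z, |V₁ z.1 - g z.1| ∂μ' = ∫ ω, |V₁ ω - g ω| ∂μ := by
    have hmeas : AEStronglyMeasurable (fun ω => |V₁ ω - g ω|) (μ'.map Prod.fst) := by
      rw [hfst]
      exact ((hV₁.sub (stronglyMeasurable_condExp.mono hm).measurable).abs).aestronglyMeasurable
    rw [← hfst, integral_map measurable_fst.aemeasurable hmeas]
  rw [hr, ← step2, ← step1]
end
end
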